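/- arXiv:2310.03243 — 5 statements merged into one kernel-verified Lean document; each statement's English description precedes it below -/
import Mathlib

section
/- Let β be a sparse RNN parameter with nnz(w^h(β)) = r_{w_h} ≥ 1 (h = 1,…,H), nnz(v^h(β)) = r_{v_h} ≥ 1 (h = 1,…,H−1), and all entries bounded in absolute value by E ≥ 1; let γ denote the set of indices of nonzero entries of β. Let β̌ be an RNN parameter whose entries vanish at every index outside γ and satisfy |β_j − β̌_j| ≤ δ₁ for every j ∈ γ, where δ₁ ≥ 0. Then for every t ≥ 1 and every hidden layer 1 ≤ i ≤ H−1, Σ_{j=1}^{L_i} |z_t^i(β)(j) − z_t^i(β̌)(j)| ≤ t^{i+1} · i · δ₁ · (Π_{k=1}^{i} r_{w_k}) · (Π_{k=1}^{i} r_{v_k})^{t−1} · (E+δ₁)^{(i+1)t−2}. -/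
set_option maxHeartbeats 1000000


open Finset

/-- Number of nonzero entries of a matrix. -/
noncomputable def nnz {m n : Type*} [Fintype m] [Fintype n] (A : Matrix m n ℝ) : ℕ :=
  Nat.card {p : m × n // A p.1 p.2 ≠ 0}

/-- One time-step of the RNN: given the previous time slice `prev` of hidden states and the
current input `xt`, compute the hidden states of all layers at the current time. -/
noncomputable def zLayer (L : ℕ → ℕ)
    (w : (h : ℕ) → Matrix (Fin (L h)) (Fin (L (h - 1))) ℝ)
    (v : (h : ℕ) → Matrix (Fin (L h)) (Fin (L h)) ℝ)
    (ψ : ℕ → ℝ → ℝ)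
    (prev : (h : ℕ) → Fin (L h) → ℝ) (xt : Fin (L 0) → ℝ) :
    (h : ℕ) → Fin (L h) → ℝ
  | 0 => xt
  | h + 1 => fun j =>
      ψ (h + 1) ((w (h + 1)).mulVec (zLayer L w v ψ prev xt h) j
        + (v (h + 1)).mulVec (prev (h + 1)) j)

/-- The hidden states `hiddenState L w v ψ x t h : Fin (L h) → ℝ` of the RNN:
`hiddenState L w v ψ x t 0 = x t` for `t ≥ 1`, `hiddenState L w v ψ x 0 h = 0`, and
`hiddenState L w v ψ x t h = ψ h (w h ⬝ z_t^{h-1} + v h ⬝ z_{t-1}^h)` for `t, h ≥ 1`. -/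
noncomputable def hiddenState (L : ℕ → ℕ)
    (w : (h : ℕ) → Matrix (Fin (L h)) (Fin (L (h - 1))) ℝ)
    (v : (h : ℕ) → Matrix (Fin (L h)) (Fin (L h)) ℝ)
    (ψ : ℕ → ℝ → ℝ)
    (x : ℕ → Fin (L 0) → ℝ) : ℕ → (h : ℕ) → Fin (L h) → ℝ
  | 0 => fun _ _ => 0
  | t + 1 => zLayer L w v ψ (hiddenState L w v ψ x t) (x (t + 1))

/-- The output of the `H`-layer RNN at time `t`: `O_t = w^H z_t^{H-1}`. -/
noncomputable def output (L : ℕ → ℕ) (H : ℕ)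
    (w : (h : ℕ) → Matrix (Fin (L h)) (Fin (L (h - 1))) ℝ)
    (v : (h : ℕ) → Matrix (Fin (L h)) (Fin (L h)) ℝ)
    (ψ : ℕ → ℝ → ℝ)
    (x : ℕ → Fin (L 0) → ℝ) (t : ℕ) : Fin (L H) → ℝ :=
  (w H).mulVec (hiddenState L w v ψ x t (H - 1))

lemma nnz_eq_card {m n : Type*} [Fintype m] [Fintype n] (A : Matrix m n ℝ) :
    nnz A = (Finset.univ.filter fun p : m × n => A p.1 p.2 ≠ 0).card := by
  classical
  rw [nnz, Nat.card_eq_fintype_card, Fintype.card_subtype]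

lemma row_sum_le {m n : Type*} [Fintype m] [Fintype n]
    (A B : Matrix m n ℝ) (hsupp : ∀ j k, A j k = 0 → B j k = 0)
    (C : ℝ) (hC0 : 0 ≤ C) (hC : ∀ j k, |B j k| ≤ C)
    (u : n → ℝ) (U : ℝ) (hU0 : 0 ≤ U) (hU : ∀ k, |u k| ≤ U) (j : m) :
    |B.mulVec u j| ≤ ∑ k ∈ Finset.univ.filter (fun k => A j k ≠ 0), (C * U) := by
  classical
  calc |B.mulVec u j| = |∑ k, B j k * u k| := rfl
    _ ≤ ∑ k, |B j k * u k| := Finset.abs_sum_le_sum_abs _ _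
    _ = ∑ k ∈ Finset.univ.filter (fun k => A j k ≠ 0), |B j k * u k| := by
        refine (Finset.sum_filter_of_ne ?_).symm
        intro k _ hne hA
        exact hne (by simp [hsupp j k hA])
    _ ≤ ∑ k ∈ Finset.univ.filter (fun k => A j k ≠ 0), (C * U) := by
        refine Finset.sum_le_sum fun k _ => ?_
        rw [abs_mul]
        exact mul_le_mul (hC j k) (hU k) (abs_nonneg _) hC0

lemma abs_mulVec_le {m n : Type*} [Fintype m] [Fintype n]
    (A B : Matrix m n ℝ) (hsupp : ∀ j k, A j k = 0 → B j k = 0)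
    (C : ℝ) (hC0 : 0 ≤ C) (hC : ∀ j k, |B j k| ≤ C)
    (u : n → ℝ) (U : ℝ) (hU0 : 0 ≤ U) (hU : ∀ k, |u k| ≤ U) (j : m) :
    |B.mulVec u j| ≤ C * (nnz A) * U := by
  classical
  refine le_trans (row_sum_le A B hsupp C hC0 hC u U hU0 hU j) ?_
  rw [Finset.sum_const, nsmul_eq_mul, nnz_eq_card]
  have hcard : (Finset.univ.filter (fun k => A j k ≠ 0)).card ≤
      (Finset.univ.filter fun p : m × n => A p.1 p.2 ≠ 0).card := by
    refine Finset.card_le_card_of_injOn (fun k => (j, k)) ?_ ?_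
    · intro k hk; simpa using (Finset.mem_filter.mp hk).2
    · intro a _ b _ h; exact congrArg Prod.snd h
  calc ((Finset.univ.filter (fun k => A j k ≠ 0)).card : ℝ) * (C * U)
      ≤ ((Finset.univ.filter fun p : m × n => A p.1 p.2 ≠ 0).card : ℝ) * (C * U) := by
        exact mul_le_mul_of_nonneg_right (by exact_mod_cast hcard) (mul_nonneg hC0 hU0)
    _ = C * _ * U := by ring

lemma l1_mulVec_le {m n : Type*} [Fintype m] [Fintype n]
    (A B : Matrix m n ℝ) (hsupp : ∀ j k, A j k = 0 → B j k = 0)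
    (C : ℝ) (hC0 : 0 ≤ C) (hC : ∀ j k, |B j k| ≤ C)
    (u : n → ℝ) (U : ℝ) (hU0 : 0 ≤ U) (hU : ∀ k, |u k| ≤ U) :
    ∑ j, |B.mulVec u j| ≤ C * (nnz A) * U := by
  classical
  calc ∑ j, |B.mulVec u j|
      ≤ ∑ j, ∑ k ∈ Finset.univ.filter (fun k => A j k ≠ 0), (C * U) :=
        Finset.sum_le_sum fun j _ => row_sum_le A B hsupp C hC0 hC u U hU0 hU j
    _ = ∑ j, ((Finset.univ.filter (fun k => A j k ≠ 0)).card : ℝ) * (C * U) := by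
        simp [Finset.sum_const, nsmul_eq_mul]
    _ = ((∑ j, (Finset.univ.filter (fun k => A j k ≠ 0)).card : ℕ) : ℝ) * (C * U) := by
        push_cast; rw [Finset.sum_mul]
    _ = ((Finset.univ.filter fun p : m × n => A p.1 p.2 ≠ 0).card : ℝ) * (C * U) := by
        congr 1
        norm_cast
        simp [Finset.card_filter, Fintype.sum_prod_type]
    _ = C * (nnz A) * U := by rw [nnz_eq_card]; ring

lemma state_arith (F : ℝ) (hF : 1 ≤ F) (t i : ℕ) (a b c d : ℝ)
    (ha : 1 ≤ a) (hb : 1 ≤ b) (hc : 1 ≤ c) (hd : 1 ≤ d) :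
    F * c * ((↑(t+1):ℝ)^i * a * b^t * F^(i*(t+1)))
      + F * d * ((↑t:ℝ)^(i+1) * (a*c) * (b*d)^(t-1) * F^((i+1)*t))
    ≤ (↑(t+1):ℝ)^(i+1) * (a*c) * (b*d)^t * F^((i+1)*(t+1)) := by
  have hF0 : (0:ℝ) < F := lt_of_lt_of_le one_pos hF
  have ha0 : (0:ℝ) ≤ a := by linarith
  have hb0 : (0:ℝ) ≤ b := by linarith
  have hc0 : (0:ℝ) ≤ c := by linarith
  have hd0 : (0:ℝ) ≤ d := by linarith
  have hbd : b ≤ b * d := le_mul_of_one_le_right hb0 hd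
  have hdbd : d ≤ b * d := le_mul_of_one_le_left hd0 hb
  have h1 : F * c * ((↑(t+1):ℝ)^i * a * b^t * F^(i*(t+1)))
      ≤ (↑(t+1):ℝ)^i * (a*c) * (b*d)^t * F^((i+1)*(t+1)) := by
    calc F * c * ((↑(t+1):ℝ)^i * a * b^t * F^(i*(t+1)))
        = (↑(t+1):ℝ)^i * (a*c) * b^t * F^(i*(t+1)+1) := by
          rw [pow_succ]; ring
      _ ≤ (↑(t+1):ℝ)^i * (a*c) * (b*d)^t * F^((i+1)*(t+1)) := by
          have he : i*(t+1)+1 ≤ (i+1)*(t+1) := by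
            have : (i+1)*(t+1) = i*(t+1) + t + 1 := by ring
            omega
          gcongr <;> assumption
  have h2 : F * d * ((↑t:ℝ)^(i+1) * (a*c) * (b*d)^(t-1) * F^((i+1)*t))
      ≤ (↑t:ℝ)^(i+1) * (a*c) * (b*d)^t * F^((i+1)*(t+1)) := by
    rcases t with _ | s
    · have : ((0:ℕ):ℝ) ^ (i+1) = 0 := by
        simp
      rw [this]
      have : F * d * (0 * (a*c) * (b*d)^(0-1) * F^((i+1)*0)) = 0 := by ring
      rw [this]
      positivity
    · have hsub : s + 1 - 1 = s := rfl
      rw [hsub]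
      calc F * d * ((↑(s+1):ℝ)^(i+1) * (a*c) * (b*d)^s * F^((i+1)*(s+1)))
          = (↑(s+1):ℝ)^(i+1) * (a*c) * ((b*d)^s * d) * F^((i+1)*(s+1)+1) := by
            rw [pow_succ]; ring
        _ ≤ (↑(s+1):ℝ)^(i+1) * (a*c) * ((b*d)^s * (b*d)) * F^((i+1)*(s+1+1)) := by
            have he : (i+1)*(s+1)+1 ≤ (i+1)*(s+1+1) := by
              have : (i+1)*(s+1+1) = (i+1)*(s+1) + i + 1 := by ring
              omega
            gcongr <;> assumption
        _ = (↑(s+1):ℝ)^(i+1) * (a*c) * (b*d)^(s+1) * F^((i+1)*(s+1+1)) := by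
            rw [← pow_succ]
  have hco : (↑(t+1):ℝ)^i + (↑t:ℝ)^(i+1) ≤ (↑(t+1):ℝ)^(i+1) := by
    have hn : (t+1)^i + t^(i+1) ≤ (t+1)^(i+1) := by
      have h1' : t^(i+1) ≤ t*(t+1)^i := by
        rw [pow_succ']
        exact Nat.mul_le_mul_left t (Nat.pow_le_pow_left (by omega) i)
      calc (t+1)^i + t^(i+1) ≤ (t+1)^i + t*(t+1)^i := Nat.add_le_add_left h1' _
        _ = (t+1)^(i+1) := by ring
    calc (↑(t+1):ℝ)^i + (↑t:ℝ)^(i+1) = ((t+1)^i + t^(i+1) : ℕ) := by push_cast; ring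
      _ ≤ ((t+1)^(i+1) : ℕ) := by exact_mod_cast hn
      _ = (↑(t+1):ℝ)^(i+1) := by push_cast; ring
  have hrest : (0:ℝ) ≤ (a*c) * (b*d)^t * F^((i+1)*(t+1)) := by positivity
  calc F * c * ((↑(t+1):ℝ)^i * a * b^t * F^(i*(t+1)))
      + F * d * ((↑t:ℝ)^(i+1) * (a*c) * (b*d)^(t-1) * F^((i+1)*t))
      ≤ (↑(t+1):ℝ)^i * (a*c) * (b*d)^t * F^((i+1)*(t+1))
        + (↑t:ℝ)^(i+1) * (a*c) * (b*d)^t * F^((i+1)*(t+1)) := add_le_add h1 h2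
    _ = ((↑(t+1):ℝ)^i + (↑t:ℝ)^(i+1)) * ((a*c) * (b*d)^t * F^((i+1)*(t+1))) := by ring
    _ ≤ (↑(t+1):ℝ)^(i+1) * ((a*c) * (b*d)^t * F^((i+1)*(t+1))) :=
        mul_le_mul_of_nonneg_right hco hrest
    _ = (↑(t+1):ℝ)^(i+1) * (a*c) * (b*d)^t * F^((i+1)*(t+1)) := by ring

lemma state_bound (H : ℕ) (L : ℕ → ℕ)
    (w W : (h : ℕ) → Matrix (Fin (L h)) (Fin (L (h - 1))) ℝ)
    (v V : (h : ℕ) → Matrix (Fin (L h)) (Fin (L h)) ℝ)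
    (ψ : ℕ → ℝ → ℝ)
    (hψ : ∀ h, 1 ≤ h → h ≤ H - 1 → LipschitzWith 1 (ψ h) ∧ ψ h 0 = 0)
    (x : ℕ → Fin (L 0) → ℝ) (hx : ∀ s j, |x s j| ≤ 1)
    (F : ℝ) (hF : 1 ≤ F)
    (hWs : ∀ h, 1 ≤ h → h ≤ H - 1 → ∀ j k, w h j k = 0 → W h j k = 0)
    (hWF : ∀ h, 1 ≤ h → h ≤ H - 1 → ∀ j k, |W h j k| ≤ F)
    (hVs : ∀ h, 1 ≤ h → h ≤ H - 1 → ∀ j k, v h j k = 0 → V h j k = 0)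
    (hVF : ∀ h, 1 ≤ h → h ≤ H - 1 → ∀ j k, |V h j k| ≤ F)
    (hwr : ∀ h, 1 ≤ h → h ≤ H - 1 → 1 ≤ nnz (w h))
    (hvr : ∀ h, 1 ≤ h → h ≤ H - 1 → 1 ≤ nnz (v h)) :
    ∀ t i, i ≤ H - 1 → ∀ j, |hiddenState L W V ψ x t i j| ≤
      (t : ℝ) ^ i * (∏ k ∈ Finset.Icc 1 i, (nnz (w k) : ℝ))
        * (∏ k ∈ Finset.Icc 1 i, (nnz (v k) : ℝ)) ^ (t - 1) * F ^ (i * t) := by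
  have hF0 : (0:ℝ) < F := lt_of_lt_of_le one_pos hF
  intro t
  induction t with
  | zero =>
    intro i hi j
    have hz : hiddenState L W V ψ x 0 i j = 0 := rfl
    rw [hz, abs_zero]
    positivity
  | succ t ih =>
    intro i
    induction i with
    | zero =>
      intro _ j
      have hz : hiddenState L W V ψ x (t+1) 0 j = x (t+1) j := rfl
      rw [hz]
      have hIcc : Finset.Icc 1 0 = (∅ : Finset ℕ) := Finset.Icc_eq_empty (by omega)
      simp [hIcc]
      exact hx (t+1) j
    | succ i ihi =>
      intro hi2 j
      have h1i : (1:ℕ) ≤ i + 1 := by omega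
      have hiH : i + 1 ≤ H - 1 := hi2
      have hiH' : i ≤ H - 1 := by omega
      have hpsi := hψ (i+1) h1i hiH
      simp only [Nat.add_sub_cancel] at ihi ⊢
      -- atoms
      have hha : (1:ℝ) ≤ ∏ k ∈ Finset.Icc 1 i, (nnz (w k) : ℝ) := by
        have hn : 1 ≤ ∏ k ∈ Finset.Icc 1 i, nnz (w k) :=
          Finset.one_le_prod' fun k hk =>
            hwr k (Finset.mem_Icc.mp hk).1 (by have := (Finset.mem_Icc.mp hk).2; omega)
        exact_mod_cast hn
      have hhb : (1:ℝ) ≤ ∏ k ∈ Finset.Icc 1 i, (nnz (v k) : ℝ) := by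
        have hn : 1 ≤ ∏ k ∈ Finset.Icc 1 i, nnz (v k) :=
          Finset.one_le_prod' fun k hk =>
            hvr k (Finset.mem_Icc.mp hk).1 (by have := (Finset.mem_Icc.mp hk).2; omega)
        exact_mod_cast hn
      have hhc : (1:ℝ) ≤ (nnz (w (i+1)) : ℝ) := by exact_mod_cast hwr (i+1) h1i hiH
      have hhd : (1:ℝ) ≤ (nnz (v (i+1)) : ℝ) := by exact_mod_cast hvr (i+1) h1i hiH
      -- the recursive structure
      have hz : hiddenState L W V ψ x (t+1) (i+1) j
          = ψ (i+1) ((W (i+1)).mulVec (hiddenState L W V ψ x (t+1) i) j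
            + (V (i+1)).mulVec (hiddenState L W V ψ x t (i+1)) j) := rfl
      have habs : |hiddenState L W V ψ x (t+1) (i+1) j|
          ≤ |(W (i+1)).mulVec (hiddenState L W V ψ x (t+1) i) j|
            + |(V (i+1)).mulVec (hiddenState L W V ψ x t (i+1)) j| := by
        rw [hz]
        have hL := hpsi.1.dist_le_mul
          ((W (i+1)).mulVec (hiddenState L W V ψ x (t+1) i) j
            + (V (i+1)).mulVec (hiddenState L W V ψ x t (i+1)) j) 0
        simp only [Real.dist_eq, hpsi.2, sub_zero, NNReal.coe_one, one_mul] at hL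
        exact le_trans hL (abs_add_le _ _)
      have hU0 : (0:ℝ) ≤ (↑(t+1):ℝ)^i * (∏ k ∈ Finset.Icc 1 i, (nnz (w k) : ℝ))
          * (∏ k ∈ Finset.Icc 1 i, (nnz (v k) : ℝ))^t * F^(i*(t+1)) := by positivity
      have hP0 : (0:ℝ) ≤ (↑t:ℝ)^(i+1) * (∏ k ∈ Finset.Icc 1 (i+1), (nnz (w k) : ℝ))
          * (∏ k ∈ Finset.Icc 1 (i+1), (nnz (v k) : ℝ))^(t-1) * F^((i+1)*t) := by positivity
      have hT1 := abs_mulVec_le (w (i+1)) (W (i+1)) (hWs (i+1) h1i hiH) F (le_of_lt hF0)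
        (hWF (i+1) h1i hiH) (hiddenState L W V ψ x (t+1) i) _ hU0 (ihi hiH') j
      have hT2 := abs_mulVec_le (v (i+1)) (V (i+1)) (hVs (i+1) h1i hiH) F (le_of_lt hF0)
        (hVF (i+1) h1i hiH) (hiddenState L W V ψ x t (i+1)) _ hP0 (ih (i+1) hi2) j
      rw [Finset.prod_Icc_succ_top h1i, Finset.prod_Icc_succ_top h1i] at hT2 ⊢
      have harith := state_arith F hF t i
        (∏ k ∈ Finset.Icc 1 i, (nnz (w k) : ℝ)) (∏ k ∈ Finset.Icc 1 i, (nnz (v k) : ℝ))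
        (nnz (w (i+1)) : ℝ) (nnz (v (i+1)) : ℝ) hha hhb hhc hhd
      calc |hiddenState L W V ψ x (t+1) (i+1) j|
          ≤ |(W (i+1)).mulVec (hiddenState L W V ψ x (t+1) i) j|
            + |(V (i+1)).mulVec (hiddenState L W V ψ x t (i+1)) j| := habs
        _ ≤ _ := add_le_add hT1 hT2
        _ ≤ _ := harith

lemma abs_add_four (a b c d : ℝ) : |a+b+c+d| ≤ |a|+|b|+|c|+|d| := by
  calc |a+b+c+d| ≤ |a+b+c| + |d| := abs_add_le _ _
    _ ≤ (|a+b| + |c|) + |d| := add_le_add_left (abs_add_le _ _) _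
    _ ≤ ((|a|+|b|) + |c|) + |d| := add_le_add_left (add_le_add_left (abs_add_le _ _) _) _

lemma coeff_ineq (t i : ℕ) :
    (t+1)^i + i*(t+1)^(i+1) + t^(i+1) + (i+1)*t^(i+2) ≤ (i+1)*(t+1)^(i+2) := by
  have h1 : t^(i+1) ≤ t*(t+1)^i := by
    rw [pow_succ']
    exact Nat.mul_le_mul_left t (Nat.pow_le_pow_left (by omega) i)
  have h2 : t^(i+2) ≤ t*(t+1)^(i+1) := by
    rw [pow_succ']
    exact Nat.mul_le_mul_left t (Nat.pow_le_pow_left (by omega) (i+1))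
  have e1 : (t+1)^(i+1) = (t+1)*(t+1)^i := by rw [pow_succ']
  have e2 : (t+1)^(i+2) = (t+1)*(t+1)^(i+1) := by rw [pow_succ']
  nlinarith [Nat.pow_le_pow_left (show t ≤ t+1 by omega) i]

lemma diff_arith (F δ₁ : ℝ) (hF : 1 ≤ F) (hδ₁ : 0 ≤ δ₁) (t i : ℕ) (a b c d : ℝ)
    (ha : 1 ≤ a) (hb : 1 ≤ b) (hc : 1 ≤ c) (hd : 1 ≤ d) :
    δ₁ * c * (((t+1:ℕ):ℝ)^i * a * b^t * F^(i*(t+1)))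
    + F * c * (((t+1:ℕ):ℝ)^(i+1) * ((i:ℕ):ℝ) * δ₁ * a * b^t * F^((i+1)*(t+1)-2))
    + δ₁ * d * (((t:ℕ):ℝ)^(i+1) * (a*c) * (b*d)^(t-1) * F^((i+1)*t))
    + F * d * (((t:ℕ):ℝ)^(i+1+1) * ((i+1:ℕ):ℝ) * δ₁ * (a*c) * (b*d)^(t-1) * F^((i+1+1)*t-2))
    ≤ ((t+1:ℕ):ℝ)^(i+1+1) * ((i+1:ℕ):ℝ) * δ₁ * (a*c) * (b*d)^t * F^((i+1+1)*(t+1)-2) := by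
  have hF0 : (0:ℝ) < F := lt_of_lt_of_le one_pos hF
  have ha0 : (0:ℝ) ≤ a := by linarith
  have hb0 : (0:ℝ) ≤ b := by linarith
  have hc0 : (0:ℝ) ≤ c := by linarith
  have hd0 : (0:ℝ) ≤ d := by linarith
  have hbd : b ≤ b * d := le_mul_of_one_le_right hb0 hd
  have hdbd : d ≤ b * d := le_mul_of_one_le_left hd0 hb
  set G : ℝ := δ₁ * (a*c) * (b*d)^t * F^((i+1+1)*(t+1)-2) with hG
  have hG0 : 0 ≤ G := by positivity
  have hT1 : δ₁ * c * (((t+1:ℕ):ℝ)^i * a * b^t * F^(i*(t+1)))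
      ≤ ((t+1:ℕ):ℝ)^i * G := by
    rw [hG]
    have he : i*(t+1) ≤ (i+1+1)*(t+1)-2 := by
      have h1 : (i+1+1)*(t+1) = i*(t+1) + 2*t + 2 := by ring
      omega
    calc δ₁ * c * (((t+1:ℕ):ℝ)^i * a * b^t * F^(i*(t+1)))
        = ((t+1:ℕ):ℝ)^i * (δ₁ * (a*c) * b^t * F^(i*(t+1))) := by ring
      _ ≤ ((t+1:ℕ):ℝ)^i * (δ₁ * (a*c) * (b*d)^t * F^((i+1+1)*(t+1)-2)) := by
          gcongr <;> assumption
      _ = ((t+1:ℕ):ℝ)^i * (δ₁ * (a*c) * (b*d)^t * F^((i+1+1)*(t+1)-2)) := by ring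
  have hT2 : F * c * (((t+1:ℕ):ℝ)^(i+1) * ((i:ℕ):ℝ) * δ₁ * a * b^t * F^((i+1)*(t+1)-2))
      ≤ ((i:ℕ):ℝ) * ((t+1:ℕ):ℝ)^(i+1) * G := by
    rcases Nat.eq_zero_or_pos i with hi0 | hi0
    · subst hi0
      simp
    · rw [hG]
      have he : (i+1)*(t+1)-2+1 ≤ (i+1+1)*(t+1)-2 := by
        have h1 : (i+1)*(t+1) = i*t+i+t+1 := by ring
        have h2 : (i+1+1)*(t+1) = i*t+i+2*t+2 := by ring
        omega
      calc F * c * (((t+1:ℕ):ℝ)^(i+1) * ((i:ℕ):ℝ) * δ₁ * a * b^t * F^((i+1)*(t+1)-2))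
          = ((i:ℕ):ℝ) * ((t+1:ℕ):ℝ)^(i+1) * (δ₁ * (a*c) * b^t * (F^((i+1)*(t+1)-2) * F)) := by
            ring
        _ = ((i:ℕ):ℝ) * ((t+1:ℕ):ℝ)^(i+1) * (δ₁ * (a*c) * b^t * F^((i+1)*(t+1)-2+1)) := by
            rw [pow_succ F ((i+1)*(t+1)-2)]
        _ ≤ ((i:ℕ):ℝ) * ((t+1:ℕ):ℝ)^(i+1) * (δ₁ * (a*c) * (b*d)^t * F^((i+1+1)*(t+1)-2)) := by
            gcongr <;> assumption
  have hT3 : δ₁ * d * (((t:ℕ):ℝ)^(i+1) * (a*c) * (b*d)^(t-1) * F^((i+1)*t))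
      ≤ ((t:ℕ):ℝ)^(i+1) * G := by
    rcases t with _ | s
    · have hz : ((0:ℕ):ℝ)^(i+1) = 0 := by simp
      rw [hz]
      have hz2 : δ₁ * d * (0 * (a*c) * (b*d)^(0-1) * F^((i+1)*0)) = 0 := by ring
      rw [hz2, zero_mul]
    · rw [hG]
      have hsub : s + 1 - 1 = s := rfl
      rw [hsub]
      have he : (i+1)*(s+1) ≤ (i+1+1)*(s+1+1)-2 := by
        have h1 : (i+1)*(s+1) = i*s+i+s+1 := by ring
        have h2 : (i+1+1)*(s+1+1) = i*s+2*i+2*s+4 := by ring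
        omega
      calc δ₁ * d * (((s+1:ℕ):ℝ)^(i+1) * (a*c) * (b*d)^s * F^((i+1)*(s+1)))
          = ((s+1:ℕ):ℝ)^(i+1) * (δ₁ * (a*c) * ((b*d)^s * d) * F^((i+1)*(s+1))) := by ring
        _ ≤ ((s+1:ℕ):ℝ)^(i+1) * (δ₁ * (a*c) * ((b*d)^s * (b*d)) * F^((i+1+1)*(s+1+1)-2)) := by
            gcongr <;> assumption
        _ = ((s+1:ℕ):ℝ)^(i+1) * (δ₁ * (a*c) * (b*d)^(s+1) * F^((i+1+1)*(s+1+1)-2)) := by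
            rw [← pow_succ]
  have hT4 : F * d * (((t:ℕ):ℝ)^(i+1+1) * ((i+1:ℕ):ℝ) * δ₁ * (a*c) * (b*d)^(t-1) * F^((i+1+1)*t-2))
      ≤ ((i+1:ℕ):ℝ) * ((t:ℕ):ℝ)^(i+1+1) * G := by
    rcases t with _ | s
    · have hz : ((0:ℕ):ℝ)^(i+1+1) = 0 := by simp
      rw [hz]
      have hz2 : F * d * (0 * ((i+1:ℕ):ℝ) * δ₁ * (a*c) * (b*d)^(0-1) * F^((i+1+1)*0-2)) = 0 := by
        ring
      rw [hz2, mul_zero, zero_mul]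
    · rw [hG]
      have hsub : s + 1 - 1 = s := rfl
      rw [hsub]
      have he : (i+1+1)*(s+1)-2+1 ≤ (i+1+1)*(s+1+1)-2 := by
        have h1 : (i+1+1)*(s+1) = i*s+i+2*s+2 := by ring
        have h2 : (i+1+1)*(s+1+1) = i*s+2*i+2*s+4 := by ring
        omega
      calc F * d * (((s+1:ℕ):ℝ)^(i+1+1) * ((i+1:ℕ):ℝ) * δ₁ * (a*c) * (b*d)^s * F^((i+1+1)*(s+1)-2))
          = ((i+1:ℕ):ℝ) * ((s+1:ℕ):ℝ)^(i+1+1)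
            * (δ₁ * (a*c) * ((b*d)^s * d) * (F^((i+1+1)*(s+1)-2) * F)) := by ring
        _ = ((i+1:ℕ):ℝ) * ((s+1:ℕ):ℝ)^(i+1+1)
            * (δ₁ * (a*c) * ((b*d)^s * d) * F^((i+1+1)*(s+1)-2+1)) := by rw [pow_succ F ((i+1+1)*(s+1)-2)]
        _ ≤ ((i+1:ℕ):ℝ) * ((s+1:ℕ):ℝ)^(i+1+1)
            * (δ₁ * (a*c) * ((b*d)^s * (b*d)) * F^((i+1+1)*(s+1+1)-2)) := by
            gcongr <;> assumption
        _ = ((i+1:ℕ):ℝ) * ((s+1:ℕ):ℝ)^(i+1+1)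
            * (δ₁ * (a*c) * (b*d)^(s+1) * F^((i+1+1)*(s+1+1)-2)) := by rw [← pow_succ]
  have hco : (((t+1:ℕ):ℝ)^i + ((i:ℕ):ℝ) * ((t+1:ℕ):ℝ)^(i+1) + ((t:ℕ):ℝ)^(i+1)
      + ((i+1:ℕ):ℝ) * ((t:ℕ):ℝ)^(i+1+1)) ≤ ((i+1:ℕ):ℝ) * ((t+1:ℕ):ℝ)^(i+1+1) := by
    have := coeff_ineq t i
    have hcast : (((t+1)^i + i*(t+1)^(i+1) + t^(i+1) + (i+1)*t^(i+2) : ℕ) : ℝ)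
        ≤ (((i+1)*(t+1)^(i+2) : ℕ) : ℝ) := by exact_mod_cast this
    push_cast at hcast
    convert hcast using 2 <;> push_cast <;> ring
  calc δ₁ * c * (((t+1:ℕ):ℝ)^i * a * b^t * F^(i*(t+1)))
    + F * c * (((t+1:ℕ):ℝ)^(i+1) * ((i:ℕ):ℝ) * δ₁ * a * b^t * F^((i+1)*(t+1)-2))
    + δ₁ * d * (((t:ℕ):ℝ)^(i+1) * (a*c) * (b*d)^(t-1) * F^((i+1)*t))
    + F * d * (((t:ℕ):ℝ)^(i+1+1) * ((i+1:ℕ):ℝ) * δ₁ * (a*c) * (b*d)^(t-1) * F^((i+1+1)*t-2))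
      ≤ ((t+1:ℕ):ℝ)^i * G + ((i:ℕ):ℝ) * ((t+1:ℕ):ℝ)^(i+1) * G + ((t:ℕ):ℝ)^(i+1) * G
        + ((i+1:ℕ):ℝ) * ((t:ℕ):ℝ)^(i+1+1) * G :=
        add_le_add (add_le_add (add_le_add hT1 hT2) hT3) hT4
    _ = (((t+1:ℕ):ℝ)^i + ((i:ℕ):ℝ) * ((t+1:ℕ):ℝ)^(i+1) + ((t:ℕ):ℝ)^(i+1)
        + ((i+1:ℕ):ℝ) * ((t:ℕ):ℝ)^(i+1+1)) * G := by ring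
    _ ≤ (((i+1:ℕ):ℝ) * ((t+1:ℕ):ℝ)^(i+1+1)) * G := mul_le_mul_of_nonneg_right hco hG0
    _ = ((t+1:ℕ):ℝ)^(i+1+1) * ((i+1:ℕ):ℝ) * δ₁ * (a*c) * (b*d)^t * F^((i+1+1)*(t+1)-2) := by
        rw [hG]; ring

lemma diff_bound
    (H : ℕ) (L : ℕ → ℕ)
    (w w' : (h : ℕ) → Matrix (Fin (L h)) (Fin (L (h - 1))) ℝ)
    (v v' : (h : ℕ) → Matrix (Fin (L h)) (Fin (L h)) ℝ)
    (ψ : ℕ → ℝ → ℝ)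
    (hψ : ∀ h, 1 ≤ h → h ≤ H - 1 → LipschitzWith 1 (ψ h) ∧ ψ h 0 = 0)
    (x : ℕ → Fin (L 0) → ℝ) (hx : ∀ s j, |x s j| ≤ 1)
    (E : ℝ) (hE : 1 ≤ E)
    (hwE : ∀ h, 1 ≤ h → h ≤ H → ∀ j k, |w h j k| ≤ E)
    (hvE : ∀ h, 1 ≤ h → h ≤ H - 1 → ∀ j k, |v h j k| ≤ E)
    (hwr : ∀ h, 1 ≤ h → h ≤ H → 1 ≤ nnz (w h))
    (hvr : ∀ h, 1 ≤ h → h ≤ H - 1 → 1 ≤ nnz (v h))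
    (δ₁ : ℝ) (hδ₁ : 0 ≤ δ₁)
    (hwclose : ∀ h, 1 ≤ h → h ≤ H → ∀ j k,
      (w h j k = 0 → w' h j k = 0) ∧ (w h j k ≠ 0 → |w h j k - w' h j k| ≤ δ₁))
    (hvclose : ∀ h, 1 ≤ h → h ≤ H - 1 → ∀ j k,
      (v h j k = 0 → v' h j k = 0) ∧ (v h j k ≠ 0 → |v h j k - v' h j k| ≤ δ₁)) :
    ∀ t i, i ≤ H - 1 →
      ∑ j, |hiddenState L w v ψ x t i j - hiddenState L w' v' ψ x t i j| ≤
        (t : ℝ) ^ (i + 1) * (i : ℝ) * δ₁ * (∏ k ∈ Finset.Icc 1 i, (nnz (w k) : ℝ))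
          * (∏ k ∈ Finset.Icc 1 i, (nnz (v k) : ℝ)) ^ (t - 1)
          * (E + δ₁) ^ ((i + 1) * t - 2) := by
  have hE0 : (0:ℝ) ≤ E := by linarith
  have hF : (1:ℝ) ≤ E + δ₁ := by linarith
  have hF0 : (0:ℝ) < E + δ₁ := by linarith
  have hwH : ∀ h, h ≤ H - 1 → h ≤ H := fun h hh => le_trans hh (Nat.sub_le H 1)
  have hW's : ∀ h, 1 ≤ h → h ≤ H - 1 → ∀ j k, w h j k = 0 → w' h j k = 0 :=
    fun h h1 h2 j k hz => (hwclose h h1 (hwH h h2) j k).1 hz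
  have hV's : ∀ h, 1 ≤ h → h ≤ H - 1 → ∀ j k, v h j k = 0 → v' h j k = 0 :=
    fun h h1 h2 j k hz => (hvclose h h1 h2 j k).1 hz
  have hWd : ∀ h, 1 ≤ h → h ≤ H - 1 → ∀ j k, |w h j k - w' h j k| ≤ δ₁ := by
    intro h h1 h2 j k
    by_cases hz : w h j k = 0
    · rw [hz, (hwclose h h1 (hwH h h2) j k).1 hz]
      simpa using hδ₁
    · exact (hwclose h h1 (hwH h h2) j k).2 hz
  have hVd : ∀ h, 1 ≤ h → h ≤ H - 1 → ∀ j k, |v h j k - v' h j k| ≤ δ₁ := by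
    intro h h1 h2 j k
    by_cases hz : v h j k = 0
    · rw [hz, (hvclose h h1 h2 j k).1 hz]
      simpa using hδ₁
    · exact (hvclose h h1 h2 j k).2 hz
  have hW'F : ∀ h, 1 ≤ h → h ≤ H - 1 → ∀ j k, |w' h j k| ≤ E + δ₁ := by
    intro h h1 h2 j k
    have h3 := hWd h h1 h2 j k
    have h4 := hwE h h1 (hwH h h2) j k
    have h5 : |w' h j k| - |w h j k| ≤ |w' h j k - w h j k| := abs_sub_abs_le_abs_sub _ _
    rw [abs_sub_comm] at h5
    linarith
  have hV'F : ∀ h, 1 ≤ h → h ≤ H - 1 → ∀ j k, |v' h j k| ≤ E + δ₁ := by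
    intro h h1 h2 j k
    have h3 := hVd h h1 h2 j k
    have h4 := hvE h h1 h2 j k
    have h5 : |v' h j k| - |v h j k| ≤ |v' h j k - v h j k| := abs_sub_abs_le_abs_sub _ _
    rw [abs_sub_comm] at h5
    linarith
  have hWF : ∀ h, 1 ≤ h → h ≤ H - 1 → ∀ j k, |w h j k| ≤ E + δ₁ :=
    fun h h1 h2 j k => le_trans (hwE h h1 (hwH h h2) j k) (by linarith)
  have hVF : ∀ h, 1 ≤ h → h ≤ H - 1 → ∀ j k, |v h j k| ≤ E + δ₁ :=
    fun h h1 h2 j k => le_trans (hvE h h1 h2 j k) (by linarith)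
  have hwr' : ∀ h, 1 ≤ h → h ≤ H - 1 → 1 ≤ nnz (w h) :=
    fun h h1 h2 => hwr h h1 (hwH h h2)
  have sb := state_bound H L w w v v ψ hψ x hx (E+δ₁) hF
    (fun h _ _ j k hz => hz) hWF (fun h _ _ j k hz => hz) hVF hwr' hvr
  intro t
  induction t with
  | zero =>
    intro i hi
    have h0 : ∑ j, |hiddenState L w v ψ x 0 i j - hiddenState L w' v' ψ x 0 i j| = 0 :=
      Finset.sum_eq_zero fun j _ => by
        show |(0:ℝ) - 0| = 0
        simp
    rw [h0]
    positivity
  | succ t ih =>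
    intro i
    induction i with
    | zero =>
      intro _
      have h0 : ∑ j, |hiddenState L w v ψ x (t+1) 0 j - hiddenState L w' v' ψ x (t+1) 0 j|
          = 0 :=
        Finset.sum_eq_zero fun j _ => by
          show |x (t+1) j - x (t+1) j| = 0
          simp
      rw [h0]
      positivity
    | succ i ihi =>
      intro hi2
      have h1i : (1:ℕ) ≤ i + 1 := by omega
      have hiH : i + 1 ≤ H - 1 := hi2
      have hiH' : i ≤ H - 1 := by omega
      have hpsi := hψ (i+1) h1i hiH
      simp only [Nat.add_sub_cancel] at ihi ⊢
      have hihi := ihi hiH'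
      have hih := ih (i+1) hi2
      have hU := sb (t+1) i hiH'
      simp only [Nat.add_sub_cancel] at hU
      have hP := sb t (i+1) hi2
      rw [Finset.prod_Icc_succ_top h1i (fun k => ((nnz (w k) : ℝ))),
        Finset.prod_Icc_succ_top h1i (fun k => ((nnz (v k) : ℝ)))] at hP hih ⊢
      -- atoms ≥ 1
      have hha : (1:ℝ) ≤ ∏ k ∈ Finset.Icc 1 i, (nnz (w k) : ℝ) := by
        have hn : 1 ≤ ∏ k ∈ Finset.Icc 1 i, nnz (w k) :=
          Finset.one_le_prod' fun k hk =>
            hwr' k (Finset.mem_Icc.mp hk).1 (by have := (Finset.mem_Icc.mp hk).2; omega)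
        exact_mod_cast hn
      have hhb : (1:ℝ) ≤ ∏ k ∈ Finset.Icc 1 i, (nnz (v k) : ℝ) := by
        have hn : 1 ≤ ∏ k ∈ Finset.Icc 1 i, nnz (v k) :=
          Finset.one_le_prod' fun k hk =>
            hvr k (Finset.mem_Icc.mp hk).1 (by have := (Finset.mem_Icc.mp hk).2; omega)
        exact_mod_cast hn
      have hhc : (1:ℝ) ≤ (nnz (w (i+1)) : ℝ) := by exact_mod_cast hwr' (i+1) h1i hiH
      have hhd : (1:ℝ) ≤ (nnz (v (i+1)) : ℝ) := by exact_mod_cast hvr (i+1) h1i hiH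
      -- nonnegativity of the bounds
      have hw0 : (0:ℝ) ≤ ∏ k ∈ Finset.Icc 1 i, (nnz (w k) : ℝ) :=
        Finset.prod_nonneg fun k _ => Nat.cast_nonneg _
      have hv0 : (0:ℝ) ≤ ∏ k ∈ Finset.Icc 1 i, (nnz (v k) : ℝ) :=
        Finset.prod_nonneg fun k _ => Nat.cast_nonneg _
      have hFnn : (0:ℝ) ≤ E + δ₁ := le_of_lt hF0
      have hU0 : (0:ℝ) ≤ ((t+1:ℕ):ℝ)^i * (∏ k ∈ Finset.Icc 1 i, (nnz (w k) : ℝ))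
          * (∏ k ∈ Finset.Icc 1 i, (nnz (v k) : ℝ))^t * (E+δ₁)^(i*(t+1)) :=
        mul_nonneg (mul_nonneg (mul_nonneg (pow_nonneg (Nat.cast_nonneg _) _) hw0)
          (pow_nonneg hv0 _)) (pow_nonneg hFnn _)
      have hP0 : (0:ℝ) ≤ ((t:ℕ):ℝ)^(i+1)
          * ((∏ k ∈ Finset.Icc 1 i, (nnz (w k) : ℝ)) * (nnz (w (i+1)) : ℝ))
          * ((∏ k ∈ Finset.Icc 1 i, (nnz (v k) : ℝ)) * (nnz (v (i+1)) : ℝ))^(t-1)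
          * (E+δ₁)^((i+1)*t) :=
        mul_nonneg (mul_nonneg (mul_nonneg (pow_nonneg (Nat.cast_nonneg _) _)
          (mul_nonneg hw0 (Nat.cast_nonneg _)))
          (pow_nonneg (mul_nonneg hv0 (Nat.cast_nonneg _)) _)) (pow_nonneg hFnn _)
      have hDu0 : (0:ℝ) ≤ ((t+1:ℕ):ℝ)^(i+1) * ((i:ℕ):ℝ) * δ₁
          * (∏ k ∈ Finset.Icc 1 i, (nnz (w k) : ℝ))
          * (∏ k ∈ Finset.Icc 1 i, (nnz (v k) : ℝ))^t * (E+δ₁)^((i+1)*(t+1)-2) :=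
        mul_nonneg (mul_nonneg (mul_nonneg (mul_nonneg (mul_nonneg
          (pow_nonneg (Nat.cast_nonneg _) _) (Nat.cast_nonneg _)) hδ₁) hw0)
          (pow_nonneg hv0 _)) (pow_nonneg hFnn _)
      have hDp0 : (0:ℝ) ≤ ((t:ℕ):ℝ)^(i+1+1) * ((i+1:ℕ):ℝ) * δ₁
          * ((∏ k ∈ Finset.Icc 1 i, (nnz (w k) : ℝ)) * (nnz (w (i+1)) : ℝ))
          * ((∏ k ∈ Finset.Icc 1 i, (nnz (v k) : ℝ)) * (nnz (v (i+1)) : ℝ))^(t-1)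
          * (E+δ₁)^((i+1+1)*t-2) :=
        mul_nonneg (mul_nonneg (mul_nonneg (mul_nonneg (mul_nonneg
          (pow_nonneg (Nat.cast_nonneg _) _) (Nat.cast_nonneg _)) hδ₁)
          (mul_nonneg hw0 (Nat.cast_nonneg _)))
          (pow_nonneg (mul_nonneg hv0 (Nat.cast_nonneg _)) _)) (pow_nonneg hFnn _)
      -- pointwise bounds on differences
      have hDu : ∀ k, |(hiddenState L w v ψ x (t+1) i - hiddenState L w' v' ψ x (t+1) i) k|
          ≤ ((t+1:ℕ):ℝ)^(i+1) * ((i:ℕ):ℝ) * δ₁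
          * (∏ k ∈ Finset.Icc 1 i, (nnz (w k) : ℝ))
          * (∏ k ∈ Finset.Icc 1 i, (nnz (v k) : ℝ))^t * (E+δ₁)^((i+1)*(t+1)-2) := by
        intro k
        refine le_trans ?_ hihi
        exact Finset.single_le_sum
          (f := fun j => |hiddenState L w v ψ x (t+1) i j - hiddenState L w' v' ψ x (t+1) i j|)
          (fun _ _ => abs_nonneg _) (Finset.mem_univ k)
      have hDp : ∀ k, |(hiddenState L w v ψ x t (i+1) - hiddenState L w' v' ψ x t (i+1)) k|
          ≤ ((t:ℕ):ℝ)^(i+1+1) * ((i+1:ℕ):ℝ) * δ₁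
          * ((∏ k ∈ Finset.Icc 1 i, (nnz (w k) : ℝ)) * (nnz (w (i+1)) : ℝ))
          * ((∏ k ∈ Finset.Icc 1 i, (nnz (v k) : ℝ)) * (nnz (v (i+1)) : ℝ))^(t-1)
          * (E+δ₁)^((i+1+1)*t-2) := by
        intro k
        refine le_trans ?_ hih
        exact Finset.single_le_sum
          (f := fun j => |hiddenState L w v ψ x t (i+1) j - hiddenState L w' v' ψ x t (i+1) j|)
          (fun _ _ => abs_nonneg _) (Finset.mem_univ k)
      -- pointwise decomposition
      have key : ∀ j : Fin (L (i+1)),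
          |hiddenState L w v ψ x (t+1) (i+1) j - hiddenState L w' v' ψ x (t+1) (i+1) j|
          ≤ |(w (i+1) - w' (i+1)).mulVec (hiddenState L w v ψ x (t+1) i) j|
            + |(w' (i+1)).mulVec
                (hiddenState L w v ψ x (t+1) i - hiddenState L w' v' ψ x (t+1) i) j|
            + |(v (i+1) - v' (i+1)).mulVec (hiddenState L w v ψ x t (i+1)) j|
            + |(v' (i+1)).mulVec
                (hiddenState L w v ψ x t (i+1) - hiddenState L w' v' ψ x t (i+1)) j| := by
        intro j
        have hz1 : hiddenState L w v ψ x (t+1) (i+1) j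
            = ψ (i+1) ((w (i+1)).mulVec (hiddenState L w v ψ x (t+1) i) j
              + (v (i+1)).mulVec (hiddenState L w v ψ x t (i+1)) j) := rfl
        have hz2 : hiddenState L w' v' ψ x (t+1) (i+1) j
            = ψ (i+1) ((w' (i+1)).mulVec (hiddenState L w' v' ψ x (t+1) i) j
              + (v' (i+1)).mulVec (hiddenState L w' v' ψ x t (i+1)) j) := rfl
        rw [hz1, hz2]
        have hL := hpsi.1.dist_le_mul
          ((w (i+1)).mulVec (hiddenState L w v ψ x (t+1) i) j
            + (v (i+1)).mulVec (hiddenState L w v ψ x t (i+1)) j)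
          ((w' (i+1)).mulVec (hiddenState L w' v' ψ x (t+1) i) j
            + (v' (i+1)).mulVec (hiddenState L w' v' ψ x t (i+1)) j)
        simp only [Real.dist_eq, NNReal.coe_one, one_mul] at hL
        refine le_trans hL ?_
        have hsplit : ((w (i+1)).mulVec (hiddenState L w v ψ x (t+1) i) j
              + (v (i+1)).mulVec (hiddenState L w v ψ x t (i+1)) j)
            - ((w' (i+1)).mulVec (hiddenState L w' v' ψ x (t+1) i) j
              + (v' (i+1)).mulVec (hiddenState L w' v' ψ x t (i+1)) j)
            = (w (i+1) - w' (i+1)).mulVec (hiddenState L w v ψ x (t+1) i) j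
              + (w' (i+1)).mulVec
                  (hiddenState L w v ψ x (t+1) i - hiddenState L w' v' ψ x (t+1) i) j
              + (v (i+1) - v' (i+1)).mulVec (hiddenState L w v ψ x t (i+1)) j
              + (v' (i+1)).mulVec
                  (hiddenState L w v ψ x t (i+1) - hiddenState L w' v' ψ x t (i+1)) j := by
          simp only [Matrix.sub_mulVec, Matrix.mulVec_sub, Pi.sub_apply]
          ring
        rw [hsplit]
        exact abs_add_four _ _ _ _
      -- the four l1 bounds
      have hS1 := l1_mulVec_le (w (i+1)) (w (i+1) - w' (i+1))
        (fun j k hz => by simp [Matrix.sub_apply, hz, hW's (i+1) h1i hiH j k hz])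
        δ₁ hδ₁ (fun j k => by simpa [Matrix.sub_apply] using hWd (i+1) h1i hiH j k)
        (hiddenState L w v ψ x (t+1) i) _ hU0 hU
      have hS2 := l1_mulVec_le (w (i+1)) (w' (i+1)) (hW's (i+1) h1i hiH)
        (E+δ₁) (le_of_lt hF0) (hW'F (i+1) h1i hiH)
        (hiddenState L w v ψ x (t+1) i - hiddenState L w' v' ψ x (t+1) i) _ hDu0 hDu
      have hS3 := l1_mulVec_le (v (i+1)) (v (i+1) - v' (i+1))
        (fun j k hz => by simp [Matrix.sub_apply, hz, hV's (i+1) h1i hiH j k hz])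
        δ₁ hδ₁ (fun j k => by simpa [Matrix.sub_apply] using hVd (i+1) h1i hiH j k)
        (hiddenState L w v ψ x t (i+1)) _ hP0 hP
      have hS4 := l1_mulVec_le (v (i+1)) (v' (i+1)) (hV's (i+1) h1i hiH)
        (E+δ₁) (le_of_lt hF0) (hV'F (i+1) h1i hiH)
        (hiddenState L w v ψ x t (i+1) - hiddenState L w' v' ψ x t (i+1)) _ hDp0 hDp
      have harith := diff_arith (E+δ₁) δ₁ hF hδ₁ t i
        (∏ k ∈ Finset.Icc 1 i, (nnz (w k) : ℝ)) (∏ k ∈ Finset.Icc 1 i, (nnz (v k) : ℝ))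
        (nnz (w (i+1)) : ℝ) (nnz (v (i+1)) : ℝ) hha hhb hhc hhd
      calc ∑ j, |hiddenState L w v ψ x (t+1) (i+1) j - hiddenState L w' v' ψ x (t+1) (i+1) j|
          ≤ ∑ j, (|(w (i+1) - w' (i+1)).mulVec (hiddenState L w v ψ x (t+1) i) j|
            + |(w' (i+1)).mulVec
                (hiddenState L w v ψ x (t+1) i - hiddenState L w' v' ψ x (t+1) i) j|
            + |(v (i+1) - v' (i+1)).mulVec (hiddenState L w v ψ x t (i+1)) j|
            + |(v' (i+1)).mulVec
                (hiddenState L w v ψ x t (i+1) - hiddenState L w' v' ψ x t (i+1)) j|) :=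
            Finset.sum_le_sum fun j _ => key j
        _ = (∑ j, |(w (i+1) - w' (i+1)).mulVec (hiddenState L w v ψ x (t+1) i) j|)
            + (∑ j, |(w' (i+1)).mulVec
                (hiddenState L w v ψ x (t+1) i - hiddenState L w' v' ψ x (t+1) i) j|)
            + (∑ j, |(v (i+1) - v' (i+1)).mulVec (hiddenState L w v ψ x t (i+1)) j|)
            + (∑ j, |(v' (i+1)).mulVec
                (hiddenState L w v ψ x t (i+1) - hiddenState L w' v' ψ x t (i+1)) j|) := by
            rw [Finset.sum_add_distrib, Finset.sum_add_distrib, Finset.sum_add_distrib]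
        _ ≤ _ := add_le_add (add_le_add (add_le_add hS1 hS2) hS3) hS4
        _ ≤ _ := harith

/-- Lemma (hidden-state difference between a sparse RNN `β = (w, v)` and its truncated
approximation `β̌ = (w', v')` supported on the support `γ` of `β` with `|β_j - β̌_j| ≤ δ₁`
on `γ`): for every `t ≥ 1` and hidden layer `1 ≤ i ≤ H-1`,
`∑_j |z_t^i(β)(j) - z_t^i(β̌)(j)| ≤ t^{i+1} i δ₁ (∏_{k=1}^i r_{w_k}) (∏_{k=1}^i r_{v_k})^{t-1}
  (E+δ₁)^{(i+1)t-2}`. -/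
theorem hiddenState_diff_bound_truncated
    (H : ℕ) (hH : 2 ≤ H)
    (L : ℕ → ℕ) (hL : ∀ h ≤ H, 1 ≤ L h)
    (w w' : (h : ℕ) → Matrix (Fin (L h)) (Fin (L (h - 1))) ℝ)
    (v v' : (h : ℕ) → Matrix (Fin (L h)) (Fin (L h)) ℝ)
    (ψ : ℕ → ℝ → ℝ)
    (hψ : ∀ h, 1 ≤ h → h ≤ H - 1 → LipschitzWith 1 (ψ h) ∧ ψ h 0 = 0)
    (x : ℕ → Fin (L 0) → ℝ) (hx : ∀ s j, |x s j| ≤ 1)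
    (E : ℝ) (hE : 1 ≤ E)
    (hwE : ∀ h, 1 ≤ h → h ≤ H → ∀ j k, |w h j k| ≤ E)
    (hvE : ∀ h, 1 ≤ h → h ≤ H - 1 → ∀ j k, |v h j k| ≤ E)
    (hwr : ∀ h, 1 ≤ h → h ≤ H → 1 ≤ nnz (w h))
    (hvr : ∀ h, 1 ≤ h → h ≤ H - 1 → 1 ≤ nnz (v h))
    (δ₁ : ℝ) (hδ₁ : 0 ≤ δ₁)
    (hwclose : ∀ h, 1 ≤ h → h ≤ H → ∀ j k,
      (w h j k = 0 → w' h j k = 0) ∧ (w h j k ≠ 0 → |w h j k - w' h j k| ≤ δ₁))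
    (hvclose : ∀ h, 1 ≤ h → h ≤ H - 1 → ∀ j k,
      (v h j k = 0 → v' h j k = 0) ∧ (v h j k ≠ 0 → |v h j k - v' h j k| ≤ δ₁))
    (t : ℕ) (ht : 1 ≤ t) (i : ℕ) (hi1 : 1 ≤ i) (hi2 : i ≤ H - 1) :
    ∑ j, |hiddenState L w v ψ x t i j - hiddenState L w' v' ψ x t i j| ≤
      (t : ℝ) ^ (i + 1) * (i : ℝ) * δ₁ * (∏ k ∈ Finset.Icc 1 i, (nnz (w k) : ℝ))
        * (∏ k ∈ Finset.Icc 1 i, (nnz (v k) : ℝ)) ^ (t - 1)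
        * (E + δ₁) ^ ((i + 1) * t - 2) := by
  exact diff_bound H L w w' v v' ψ hψ x hx E hE hwE hvE hwr hvr δ₁ hδ₁ hwclose hvclose t i hi2
end

section
/- Let β' be a sparse RNN parameter with nnz(w^h(β')) ≤ r_{w_h} where r_{w_h} ≥ 1 (h = 1,…,H), nnz(v^h(β')) ≤ r_{v_h} where r_{v_h} ≥ 1 (h = 1,…,H−1), and all entries bounded in absolute value by E' ≥ 1. Let β̃ be any RNN parameter (same architecture) with |β'_j − β̃_j| ≤ δ₂ for every index j, where δ₂ ≥ 0. Then for every t ≥ 1 and every hidden layer 1 ≤ i ≤ H−1, Σ_{j=1}^{L_i} |z_t^i(β')(j) − z_t^i(β̃)(j)| ≤ t^{i+1} · δ₂ · (p·L_1 + Σ_{k=1}^{i} L_k) · (Π_{k=1}^{i} [δ₂·L_k + r_{w_k}·E']) · (Π_{k=1}^{i} [δ₂·L_k + r_{v_k}·E'])^{t−1}. -/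
open Finset

lemma abs_lip0 {f : ℝ → ℝ} (hf : LipschitzWith 1 f) (h0 : f 0 = 0) (a : ℝ) :
    |f a| ≤ |a| := by
  have h := hf.dist_le_mul a 0
  simp [Real.dist_eq, h0] at h
  simpa using h

lemma abs_lip {f : ℝ → ℝ} (hf : LipschitzWith 1 f) (a b : ℝ) :
    |f a - f b| ≤ |a - b| := by
  have h := hf.dist_le_mul a b
  simpa [Real.dist_eq] using h

lemma abs_mulVec_le_s6 {m n : ℕ} (A : Matrix (Fin m) (Fin n) ℝ) (u : Fin n → ℝ) (j : Fin m) :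
    |A.mulVec u j| ≤ ∑ k, |A j k| * |u k| := by
  refine le_trans ?_ (le_of_eq rfl)
  simp only [Matrix.mulVec, dotProduct]
  exact (Finset.abs_sum_le_sum_abs _ _).trans (le_of_eq (by simp [abs_mul]))

lemma sum_sum_abs_mul_le {m n : ℕ} (A : Matrix (Fin m) (Fin n) ℝ) (u : Fin n → ℝ)
    (r : ℕ) (E M : ℝ) (hE : 0 ≤ E) (hM : 0 ≤ M)
    (hA : ∀ j k, |A j k| ≤ E) (hr : nnz A ≤ r) (hu : ∀ k, |u k| ≤ M) :
    ∑ j, ∑ k, |A j k| * |u k| ≤ (r : ℝ) * E * M := by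
  classical
  have hnnz : nnz A = (Finset.univ.filter (fun p : Fin m × Fin n => A p.1 p.2 ≠ 0)).card := by
    rw [nnz, Nat.card_eq_fintype_card]
    exact Fintype.card_subtype _
  have h1 : ∑ j, ∑ k, |A j k| * |u k|
      = ∑ p ∈ (Finset.univ : Finset (Fin m × Fin n)), |A p.1 p.2| * |u p.2| := by
    rw [← Finset.univ_product_univ, Finset.sum_product]
  rw [h1]
  rw [← Finset.sum_filter_of_ne (p := fun p : Fin m × Fin n => A p.1 p.2 ≠ 0)
    (by intro p _ hp h0; exact hp (by simp [h0]))]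
  calc ∑ p ∈ Finset.univ.filter (fun p : Fin m × Fin n => A p.1 p.2 ≠ 0), |A p.1 p.2| * |u p.2|
      ≤ ∑ _p ∈ Finset.univ.filter (fun p : Fin m × Fin n => A p.1 p.2 ≠ 0), E * M :=
        Finset.sum_le_sum fun p _ => mul_le_mul (hA _ _) (hu _) (abs_nonneg _) hE
    _ = ((Finset.univ.filter (fun p : Fin m × Fin n => A p.1 p.2 ≠ 0)).card : ℝ) * (E * M) := by
        rw [Finset.sum_const, nsmul_eq_mul]
    _ ≤ (r : ℝ) * (E * M) := by
        apply mul_le_mul_of_nonneg_right _ (by positivity)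
        exact_mod_cast (hnnz ▸ hr)
    _ = (r : ℝ) * E * M := by ring

lemma sum_sum_pert_le {m n : ℕ} (A B : Matrix (Fin m) (Fin n) ℝ) (u : Fin n → ℝ)
    (δ : ℝ) (hδ : 0 ≤ δ) (h : ∀ j k, |A j k - B j k| ≤ δ) :
    ∑ j, ∑ k, |A j k - B j k| * |u k| ≤ δ * (m : ℝ) * ∑ k, |u k| := by
  calc ∑ j, ∑ k, |A j k - B j k| * |u k|
      ≤ ∑ _j : Fin m, ∑ k, δ * |u k| :=
        Finset.sum_le_sum fun j _ => Finset.sum_le_sum fun k _ =>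
          mul_le_mul_of_nonneg_right (h j k) (abs_nonneg _)
    _ = (m : ℝ) * (δ * ∑ k, |u k|) := by
        rw [Finset.sum_const, ← Finset.mul_sum, nsmul_eq_mul]
        simp
    _ = δ * (m : ℝ) * ∑ k, |u k| := by ring

lemma scalar6 (a a' u u' : ℝ) :
    |a * u - a' * u'| ≤ |a - a'| * |u| + |a| * |u - u'| + |a - a'| * |u - u'| := by
  have e : a * u - a' * u' = (a - a') * u + a * (u - u') + (-(a - a')) * (u - u') := by ring
  rw [e]
  refine (abs_add_three _ _ _).trans ?_
  simp only [abs_mul, abs_neg]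
  exact le_refl _

lemma mypow_le {a b : ℝ} (ha : 0 ≤ a) (hab : a ≤ b) (n : ℕ) : a ^ n ≤ b ^ n :=
  pow_le_pow_left₀ ha hab n

lemma arith1 (t h : ℕ) (a b Pa Pb : ℝ)
    (ha : 1 ≤ a) (hb : 1 ≤ b) (hPa : 1 ≤ Pa) (hPb : 1 ≤ Pb) :
    a * (((t + 1 : ℕ) : ℝ) ^ h * Pa * Pb ^ (t + 1 - 1))
      + b * ((t : ℝ) ^ (h + 1) * (Pa * a) * (Pb * b) ^ (t - 1))
      ≤ ((t + 1 : ℕ) : ℝ) ^ (h + 1) * (Pa * a) * (Pb * b) ^ (t + 1 - 1) := by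
  have ha0 : (0:ℝ) ≤ a := by linarith
  have hb0 : (0:ℝ) ≤ b := by linarith
  have hPa0 : (0:ℝ) ≤ Pa := by linarith
  have hPb0 : (0:ℝ) ≤ Pb := by linarith
  simp only [Nat.add_sub_cancel]
  push_cast
  rcases t with _ | s
  · push_cast
    simp only [Nat.zero_eq, Nat.cast_zero, zero_add, one_pow, pow_succ]
    norm_num
    nlinarith [pow_nonneg hPb0 0]
  · push_cast
    set q : ℝ := (s : ℝ) + 1 with hq
    have hs0 : (0:ℝ) ≤ (s:ℝ) := Nat.cast_nonneg s
    have hq1 : 1 ≤ q := by linarith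
    have hq0 : 0 ≤ q := by linarith
    -- goal: a * ((q+1)^h * Pa * Pb^(s+1)) + b * (q^(h+1) * (Pa*a) * (Pb*b)^s)
    --       ≤ (q+1)^(h+1) * (Pa*a) * (Pb*b)^(s+1)
    have e1 : a * ((q + 1) ^ h * Pa * Pb ^ (s + 1))
        ≤ (q + 1) ^ h * ((Pa * a) * (Pb * b) ^ (s + 1)) := by
      have hPow : Pb ^ (s + 1) ≤ (Pb * b) ^ (s + 1) :=
        mypow_le hPb0 (le_mul_of_one_le_right hPb0 hb) _
      calc a * ((q + 1) ^ h * Pa * Pb ^ (s + 1))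
          = (q + 1) ^ h * ((Pa * a) * Pb ^ (s + 1)) := by ring
        _ ≤ (q + 1) ^ h * ((Pa * a) * (Pb * b) ^ (s + 1)) := by
            apply mul_le_mul_of_nonneg_left _ (by positivity)
            exact mul_le_mul_of_nonneg_left hPow (by positivity)
    have e2 : b * (q ^ (h + 1) * (Pa * a) * (Pb * b) ^ s)
        ≤ q ^ (h + 1) * ((Pa * a) * (Pb * b) ^ (s + 1)) := by
      calc b * (q ^ (h + 1) * (Pa * a) * (Pb * b) ^ s)
          = q ^ (h + 1) * ((Pa * a) * ((Pb * b) ^ s * b)) := by ring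
        _ ≤ q ^ (h + 1) * ((Pa * a) * ((Pb * b) ^ s * (Pb * b))) := by
            apply mul_le_mul_of_nonneg_left _ (by positivity)
            apply mul_le_mul_of_nonneg_left _ (by positivity)
            exact mul_le_mul_of_nonneg_left (le_mul_of_one_le_left hb0 hPb) (by positivity)
        _ = q ^ (h + 1) * ((Pa * a) * (Pb * b) ^ (s + 1)) := by ring
    have e3 : (q + 1) ^ h + q ^ (h + 1) ≤ (q + 1) ^ (h + 1) := by
      have h4 : q ^ (h + 1) ≤ q * (q + 1) ^ h := by
        rw [pow_succ']
        exact mul_le_mul_of_nonneg_left (mypow_le hq0 (by linarith) _) hq0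
      calc (q + 1) ^ h + q ^ (h + 1) ≤ (q + 1) ^ h + q * (q + 1) ^ h := by linarith
        _ = (q + 1) ^ (h + 1) := by ring
    have hK : (0:ℝ) ≤ (Pa * a) * (Pb * b) ^ (s + 1) := by positivity
    calc a * ((q + 1) ^ h * Pa * Pb ^ (s + 1)) + b * (q ^ (h + 1) * (Pa * a) * (Pb * b) ^ s)
        ≤ ((q + 1) ^ h + q ^ (h + 1)) * ((Pa * a) * (Pb * b) ^ (s + 1)) := by
          rw [add_mul]; exact add_le_add e1 e2
      _ ≤ (q + 1) ^ (h + 1) * ((Pa * a) * (Pb * b) ^ (s + 1)) :=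
          mul_le_mul_of_nonneg_right e3 hK
      _ = (q + 1) ^ (h + 1) * (Pa * a) * (Pb * b) ^ (s + 1) := by ring

lemma arith2b (t h : ℕ) (δ SL LL P Q c d : ℝ)
    (hδ : 0 ≤ δ) (hSL : 0 ≤ SL) (hLL : 0 ≤ LL)
    (hP : 1 ≤ P) (hQ : 1 ≤ Q) (hc : 1 ≤ c) (hd : 1 ≤ d) :
    δ * LL * (((t + 1 : ℕ) : ℝ) ^ h * P * Q ^ (t + 1 - 1))
    + c * (((t + 1 : ℕ) : ℝ) ^ (h + 1) * δ * SL * P * Q ^ (t + 1 - 1))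
    + δ * LL * ((t : ℝ) ^ (h + 1) * (P * c) * (Q * d) ^ (t - 1))
    + d * ((t : ℝ) ^ (h + 1 + 1) * δ * (SL + LL) * (P * c) * (Q * d) ^ (t - 1))
    ≤ ((t + 1 : ℕ) : ℝ) ^ (h + 1 + 1) * δ * (SL + LL) * (P * c) * (Q * d) ^ (t + 1 - 1) := by
  have hP0 : (0:ℝ) ≤ P := by linarith
  have hQ0 : (0:ℝ) ≤ Q := by linarith
  have hc0 : (0:ℝ) ≤ c := by linarith
  have hd0 : (0:ℝ) ≤ d := by linarith
  simp only [Nat.add_sub_cancel]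
  push_cast
  rcases t with _ | s
  · simp only [Nat.cast_zero, zero_add, zero_pow, Nat.succ_ne_zero, ne_eq, not_false_iff,
      one_pow, pow_succ]
    norm_num
    nlinarith [mul_nonneg (mul_nonneg (mul_nonneg hδ hLL) hP0) (sub_nonneg.2 hc)]
  · push_cast
    set q : ℝ := (s : ℝ) + 1 with hq
    have hs0 : (0:ℝ) ≤ (s:ℝ) := Nat.cast_nonneg s
    have hq1 : 1 ≤ q := by linarith
    have hq0 : 0 ≤ q := by linarith
    have hPc : P ≤ P * c := le_mul_of_one_le_right hP0 hc
    have hQd : Q ^ (s + 1) ≤ (Q * d) ^ (s + 1) :=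
      mypow_le hQ0 (le_mul_of_one_le_right hQ0 hd) _
    have hdQ : (Q * d) ^ s * d ≤ (Q * d) ^ (s + 1) := by
      rw [pow_succ]
      exact mul_le_mul_of_nonneg_left (le_mul_of_one_le_left hd0 hQ) (by positivity)
    set K : ℝ := (P * c) * (Q * d) ^ (s + 1) with hK
    have hK0 : (0:ℝ) ≤ K := by positivity
    have e1 : δ * LL * ((q + 1) ^ h * P * Q ^ (s + 1)) ≤ (q + 1) ^ h * (δ * LL * K) := by
      calc δ * LL * ((q + 1) ^ h * P * Q ^ (s + 1))
          = (q + 1) ^ h * (δ * LL * (P * Q ^ (s + 1))) := by ring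
        _ ≤ (q + 1) ^ h * (δ * LL * ((P * c) * (Q * d) ^ (s + 1))) := by
            apply mul_le_mul_of_nonneg_left _ (by positivity)
            apply mul_le_mul_of_nonneg_left _ (by positivity)
            exact mul_le_mul hPc hQd (by positivity) (by positivity)
    have e2 : c * ((q + 1) ^ (h + 1) * δ * SL * P * Q ^ (s + 1))
        ≤ (q + 1) ^ (h + 1) * (δ * SL * K) := by
      calc c * ((q + 1) ^ (h + 1) * δ * SL * P * Q ^ (s + 1))
          = (q + 1) ^ (h + 1) * (δ * SL * ((P * c) * Q ^ (s + 1))) := by ring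
        _ ≤ (q + 1) ^ (h + 1) * (δ * SL * ((P * c) * (Q * d) ^ (s + 1))) := by
            apply mul_le_mul_of_nonneg_left _ (by positivity)
            apply mul_le_mul_of_nonneg_left _ (by positivity)
            exact mul_le_mul_of_nonneg_left hQd (by positivity)
    have e3 : δ * LL * (q ^ (h + 1) * (P * c) * (Q * d) ^ s)
        ≤ q ^ (h + 1) * (δ * LL * K) := by
      calc δ * LL * (q ^ (h + 1) * (P * c) * (Q * d) ^ s)
          = q ^ (h + 1) * (δ * LL * ((P * c) * (Q * d) ^ s)) := by ring
        _ ≤ q ^ (h + 1) * (δ * LL * ((P * c) * (Q * d) ^ (s + 1))) := by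
            apply mul_le_mul_of_nonneg_left _ (by positivity)
            apply mul_le_mul_of_nonneg_left _ (by positivity)
            apply mul_le_mul_of_nonneg_left _ (by positivity)
            exact le_mul_of_one_le_right (by positivity) (one_le_mul_of_one_le_of_one_le hQ hd)
    have e4 : d * (q ^ (h + 1 + 1) * δ * (SL + LL) * (P * c) * (Q * d) ^ s)
        ≤ q ^ (h + 1 + 1) * (δ * (SL + LL) * K) := by
      calc d * (q ^ (h + 1 + 1) * δ * (SL + LL) * (P * c) * (Q * d) ^ s)
          = q ^ (h + 1 + 1) * (δ * (SL + LL) * ((P * c) * ((Q * d) ^ s * d))) := by ring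
        _ ≤ q ^ (h + 1 + 1) * (δ * (SL + LL) * ((P * c) * (Q * d) ^ (s + 1))) := by
            apply mul_le_mul_of_nonneg_left _ (by positivity)
            apply mul_le_mul_of_nonneg_left _ (by positivity)
            exact mul_le_mul_of_nonneg_left hdQ (by positivity)
    have cLL : (q + 1) ^ h + q ^ (h + 1) + q ^ (h + 1 + 1) ≤ (q + 1) ^ (h + 1 + 1) := by
      have h1 : q ^ h ≤ (q + 1) ^ h := mypow_le hq0 (by linarith) h
      have h2 : (q + 1) ^ h + q ^ (h + 1) + q ^ (h + 1 + 1)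
          ≤ (q + 1) ^ h * (1 + q + q ^ 2) := by
        have e : (q+1)^h * (1 + q + q^2) = (q+1)^h + q * (q+1)^h + q^2 * (q+1)^h := by ring
        rw [e]
        have i1 : q ^ (h+1) ≤ q * (q+1)^h := by
          rw [pow_succ']
          exact mul_le_mul_of_nonneg_left h1 hq0
        have i2 : q ^ (h+1+1) ≤ q^2 * (q+1)^h := by
          have : q ^ (h+1+1) = q^2 * q^h := by ring
          rw [this]
          exact mul_le_mul_of_nonneg_left h1 (by positivity)
        linarith
      have h3 : (q + 1) ^ h * (1 + q + q ^ 2) ≤ (q + 1) ^ h * (q + 1) ^ 2 := by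
        apply mul_le_mul_of_nonneg_left _ (by positivity)
        nlinarith
      have h4 : (q + 1) ^ h * (q + 1) ^ 2 = (q + 1) ^ (h + 1 + 1) := by ring
      linarith
    have cSL : (q + 1) ^ (h + 1) + q ^ (h + 1 + 1) ≤ (q + 1) ^ (h + 1 + 1) := by
      have h1 : q ^ (h+1) ≤ (q + 1) ^ (h+1) := mypow_le hq0 (by linarith) _
      have i1 : q ^ (h+1+1) ≤ q * (q+1)^(h+1) := by
        rw [pow_succ']
        exact mul_le_mul_of_nonneg_left h1 hq0
      have h4 : (q + 1) ^ (h+1) * (1 + q) = (q + 1) ^ (h + 1 + 1) := by ring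
      nlinarith [pow_nonneg (by linarith : (0:ℝ) ≤ q + 1) (h+1)]
    have m1 := mul_le_mul_of_nonneg_right cLL (by positivity : (0:ℝ) ≤ δ * LL * K)
    have m2 := mul_le_mul_of_nonneg_right cSL (by positivity : (0:ℝ) ≤ δ * SL * K)
    simp only [hK] at e1 e2 e3 e4 m1 m2
    linarith [e1, e2, e3, e4, m1, m2]

lemma arith2a (t : ℕ) (δ SL LL P Q c d : ℝ)
    (hδ : 0 ≤ δ) (hSL : 0 ≤ SL) (hLL : 0 ≤ LL)
    (hP : 1 ≤ P) (hQ : 1 ≤ Q) (hc : 1 ≤ c) (hd : 1 ≤ d) :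
    δ * SL
    + δ * LL * ((t : ℝ) ^ (0 + 1) * (P * c) * (Q * d) ^ (t - 1))
    + d * ((t : ℝ) ^ (0 + 1 + 1) * δ * (SL + LL) * (P * c) * (Q * d) ^ (t - 1))
    ≤ ((t + 1 : ℕ) : ℝ) ^ (0 + 1 + 1) * δ * (SL + LL) * (P * c) * (Q * d) ^ (t + 1 - 1) := by
  have hP0 : (0:ℝ) ≤ P := by linarith
  have hQ0 : (0:ℝ) ≤ Q := by linarith
  have hc0 : (0:ℝ) ≤ c := by linarith
  have hd0 : (0:ℝ) ≤ d := by linarith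
  simp only [Nat.add_sub_cancel]
  push_cast
  rcases t with _ | s
  · simp only [Nat.cast_zero, zero_add, zero_pow, Nat.succ_ne_zero, ne_eq, not_false_iff,
      pow_succ, pow_zero]
    norm_num
    nlinarith [mul_nonneg (mul_nonneg hδ hLL) (mul_nonneg hP0 hc0),
      mul_nonneg (mul_nonneg hδ hSL) (mul_nonneg hP0 hc0),
      mul_le_mul_of_nonneg_left (one_le_mul_of_one_le_of_one_le hP hc)
        (mul_nonneg hδ hSL)]
  · push_cast
    set q : ℝ := (s : ℝ) + 1 with hq
    have hs0 : (0:ℝ) ≤ (s:ℝ) := Nat.cast_nonneg s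
    have hq1 : 1 ≤ q := by linarith
    have hq0 : 0 ≤ q := by linarith
    have hdQ : (Q * d) ^ s * d ≤ (Q * d) ^ (s + 1) := by
      rw [pow_succ]
      exact mul_le_mul_of_nonneg_left (le_mul_of_one_le_left hd0 hQ) (by positivity)
    set K : ℝ := (P * c) * (Q * d) ^ (s + 1) with hK
    have hK0 : (0:ℝ) ≤ K := by positivity
    have hK1 : (1:ℝ) ≤ K := by
      apply one_le_mul_of_one_le_of_one_le (one_le_mul_of_one_le_of_one_le hP hc)
      exact one_le_pow₀ (one_le_mul_of_one_le_of_one_le hQ hd)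
    have e0 : δ * SL ≤ 1 * (δ * SL * K) := by nlinarith [mul_nonneg hδ hSL]
    have e3 : δ * LL * (q ^ (0 + 1) * (P * c) * (Q * d) ^ s)
        ≤ q * (δ * LL * K) := by
      calc δ * LL * (q ^ (0 + 1) * (P * c) * (Q * d) ^ s)
          = q * (δ * LL * ((P * c) * (Q * d) ^ s)) := by ring
        _ ≤ q * (δ * LL * ((P * c) * (Q * d) ^ (s + 1))) := by
            apply mul_le_mul_of_nonneg_left _ hq0
            apply mul_le_mul_of_nonneg_left _ (by positivity)
            apply mul_le_mul_of_nonneg_left _ (by positivity)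
            exact le_mul_of_one_le_right (by positivity) (one_le_mul_of_one_le_of_one_le hQ hd)
    have e4 : d * (q ^ (0 + 1 + 1) * δ * (SL + LL) * (P * c) * (Q * d) ^ s)
        ≤ q ^ 2 * (δ * (SL + LL) * K) := by
      calc d * (q ^ (0 + 1 + 1) * δ * (SL + LL) * (P * c) * (Q * d) ^ s)
          = q ^ 2 * (δ * (SL + LL) * ((P * c) * ((Q * d) ^ s * d))) := by ring
        _ ≤ q ^ 2 * (δ * (SL + LL) * ((P * c) * (Q * d) ^ (s + 1))) := by
            apply mul_le_mul_of_nonneg_left _ (by positivity)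
            apply mul_le_mul_of_nonneg_left _ (by positivity)
            exact mul_le_mul_of_nonneg_left hdQ (by positivity)
    have cSL : (1:ℝ) + q ^ 2 ≤ (q + 1) ^ 2 := by nlinarith
    have cLL : q + q ^ 2 ≤ (q + 1) ^ 2 := by nlinarith
    have m1 := mul_le_mul_of_nonneg_right cSL (by positivity : (0:ℝ) ≤ δ * SL * K)
    have m2 := mul_le_mul_of_nonneg_right cLL (by positivity : (0:ℝ) ≤ δ * LL * K)
    simp only [hK] at e0 e3 e4 m1 m2
    ring_nf at e0 e3 e4 m1 m2 ⊢
    linarith [e0, e3, e4, m1, m2]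

/-- One hidden layer state of the RNN. -/

lemma hiddenState_zero (L : ℕ → ℕ) (w : (h : ℕ) → Matrix (Fin (L h)) (Fin (L (h - 1))) ℝ)
    (v : (h : ℕ) → Matrix (Fin (L h)) (Fin (L h)) ℝ) (ψ : ℕ → ℝ → ℝ)
    (x : ℕ → Fin (L 0) → ℝ) (h : ℕ) (j : Fin (L h)) :
    hiddenState L w v ψ x 0 h j = 0 := rfl

lemma hiddenState_succ_zero (L : ℕ → ℕ) (w : (h : ℕ) → Matrix (Fin (L h)) (Fin (L (h - 1))) ℝ)
    (v : (h : ℕ) → Matrix (Fin (L h)) (Fin (L h)) ℝ) (ψ : ℕ → ℝ → ℝ)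
    (x : ℕ → Fin (L 0) → ℝ) (t : ℕ) (j : Fin (L 0)) :
    hiddenState L w v ψ x (t + 1) 0 j = x (t + 1) j := rfl

lemma hiddenState_succ_succ (L : ℕ → ℕ) (w : (h : ℕ) → Matrix (Fin (L h)) (Fin (L (h - 1))) ℝ)
    (v : (h : ℕ) → Matrix (Fin (L h)) (Fin (L h)) ℝ) (ψ : ℕ → ℝ → ℝ)
    (x : ℕ → Fin (L 0) → ℝ) (t h : ℕ) (j : Fin (L (h + 1))) :
    hiddenState L w v ψ x (t + 1) (h + 1) j
      = ψ (h + 1) ((w (h + 1)).mulVec (hiddenState L w v ψ x (t + 1) h) j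
        + (v (h + 1)).mulVec (hiddenState L w v ψ x t (h + 1)) j) := rfl

lemma my_one_le_prod (s : Finset ℕ) (f : ℕ → ℝ) (h : ∀ i ∈ s, 1 ≤ f i) :
    1 ≤ ∏ i ∈ s, f i := by
  have := Finset.prod_le_prod (f := fun _ : ℕ => (1:ℝ)) (g := f)
    (fun i _ => zero_le_one) (fun i hi => h i hi)
  simpa using this

lemma stateBound
    (H : ℕ) (L : ℕ → ℕ)
    (w : (h : ℕ) → Matrix (Fin (L h)) (Fin (L (h - 1))) ℝ)
    (v : (h : ℕ) → Matrix (Fin (L h)) (Fin (L h)) ℝ)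
    (ψ : ℕ → ℝ → ℝ)
    (hψ : ∀ h, 1 ≤ h → h ≤ H - 1 → LipschitzWith 1 (ψ h) ∧ ψ h 0 = 0)
    (x : ℕ → Fin (L 0) → ℝ) (hx : ∀ s j, |x s j| ≤ 1)
    (E' : ℝ) (hE' : 1 ≤ E') (rw₀ rv₀ : ℕ → ℕ)
    (hrw : ∀ h, 1 ≤ h → h ≤ H → 1 ≤ rw₀ h) (hrv : ∀ h, 1 ≤ h → h ≤ H - 1 → 1 ≤ rv₀ h)
    (hwE : ∀ h, 1 ≤ h → h ≤ H → ∀ j k, |w h j k| ≤ E')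
    (hvE : ∀ h, 1 ≤ h → h ≤ H - 1 → ∀ j k, |v h j k| ≤ E')
    (hwr : ∀ h, 1 ≤ h → h ≤ H → nnz (w h) ≤ rw₀ h)
    (hvr : ∀ h, 1 ≤ h → h ≤ H - 1 → nnz (v h) ≤ rv₀ h) :
    ∀ t h, h ≤ H - 1 →
      (∀ j, |hiddenState L w v ψ x t h j| ≤
        (t:ℝ)^h * (∏ k ∈ Icc 1 h, ((rw₀ k:ℝ) * E')) * (∏ k ∈ Icc 1 h, ((rv₀ k:ℝ) * E'))^(t-1)) ∧
      (1 ≤ h → ∑ j, |hiddenState L w v ψ x t h j| ≤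
        (t:ℝ)^h * (∏ k ∈ Icc 1 h, ((rw₀ k:ℝ) * E')) * (∏ k ∈ Icc 1 h, ((rv₀ k:ℝ) * E'))^(t-1)) := by
  have hE0 : (0:ℝ) ≤ E' := by linarith
  have hwfac : ∀ k, 1 ≤ k → k ≤ H - 1 → (1:ℝ) ≤ (rw₀ k:ℝ) * E' := by
    intro k h1 h2
    have h3 : (1:ℝ) ≤ (rw₀ k:ℝ) := by exact_mod_cast hrw k h1 (le_trans h2 (Nat.sub_le H 1))
    nlinarith
  have hvfac : ∀ k, 1 ≤ k → k ≤ H - 1 → (1:ℝ) ≤ (rv₀ k:ℝ) * E' := by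
    intro k h1 h2
    have h3 : (1:ℝ) ≤ (rv₀ k:ℝ) := by exact_mod_cast hrv k h1 h2
    nlinarith
  have hPw : ∀ h, h ≤ H - 1 → (1:ℝ) ≤ ∏ k ∈ Icc 1 h, ((rw₀ k:ℝ) * E') := by
    intro h hh
    refine my_one_le_prod _ _ fun k hk => ?_
    rw [Finset.mem_Icc] at hk
    exact hwfac k hk.1 (le_trans hk.2 hh)
  have hPv : ∀ h, h ≤ H - 1 → (1:ℝ) ≤ ∏ k ∈ Icc 1 h, ((rv₀ k:ℝ) * E') := by
    intro h hh
    refine my_one_le_prod _ _ fun k hk => ?_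
    rw [Finset.mem_Icc] at hk
    exact hvfac k hk.1 (le_trans hk.2 hh)
  have hB0 : ∀ (t h : ℕ), h ≤ H - 1 →
      (0:ℝ) ≤ (t:ℝ)^h * (∏ k ∈ Icc 1 h, ((rw₀ k:ℝ) * E'))
        * (∏ k ∈ Icc 1 h, ((rv₀ k:ℝ) * E'))^(t-1) := by
    intro t h hh
    have h1 := hPw h hh
    have h2 := hPv h hh
    have := pow_nonneg (le_trans zero_le_one h2) (t-1)
    have h3 : (0:ℝ) ≤ (t:ℝ)^h := by positivity
    exact mul_nonneg (mul_nonneg h3 (by linarith)) this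
  intro t
  induction t with
  | zero =>
    intro h hh
    constructor
    · intro j
      rw [hiddenState_zero, abs_zero]
      exact hB0 0 h hh
    · intro _
      have e : ∑ j, |hiddenState L w v ψ x 0 h j| = 0 := by
        simp [hiddenState_zero]
      rw [e]
      exact hB0 0 h hh
  | succ t ih =>
    intro h
    induction h with
    | zero =>
      intro _
      constructor
      · intro j
        rw [hiddenState_succ_zero]
        have : Finset.Icc 1 0 = (∅ : Finset ℕ) := by
          apply Finset.Icc_eq_empty; omega
        simpa [this] using hx (t+1) j
      · intro h10; exact absurd h10 (by omega)
    | succ h ihh =>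
      intro hh1
      have hhH : h ≤ H - 1 := Nat.le_of_succ_le hh1
      have h1H : 1 ≤ h + 1 := Nat.succ_le_succ (Nat.zero_le _)
      have hH' : h + 1 ≤ H := le_trans hh1 (Nat.sub_le H 1)
      have hψ' := hψ (h+1) h1H hh1
      have hprev := (ihh hhH).1
      have hlag := (ih (h+1) hh1).1
      have hM1 := hB0 (t+1) h hhH
      have hM2 := hB0 t (h+1) hh1
      have key : ∑ j, |hiddenState L w v ψ x (t+1) (h+1) j| ≤
          (rw₀ (h+1) : ℝ) * E' * (((t+1:ℕ):ℝ)^h * (∏ k ∈ Icc 1 h, ((rw₀ k:ℝ) * E'))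
            * (∏ k ∈ Icc 1 h, ((rv₀ k:ℝ) * E'))^(t+1-1))
          + (rv₀ (h+1) : ℝ) * E' * ((t:ℝ)^(h+1) * (∏ k ∈ Icc 1 (h+1), ((rw₀ k:ℝ) * E'))
            * (∏ k ∈ Icc 1 (h+1), ((rv₀ k:ℝ) * E'))^(t-1)) := by
        have habs : ∀ j, |hiddenState L w v ψ x (t+1) (h+1) j| ≤
            (∑ k, |w (h+1) j k| * |hiddenState L w v ψ x (t+1) h k|)
            + (∑ k, |v (h+1) j k| * |hiddenState L w v ψ x t (h+1) k|) := by
          intro j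
          rw [hiddenState_succ_succ]
          refine (abs_lip0 hψ'.1 hψ'.2 _).trans ?_
          refine (abs_add_le _ _).trans ?_
          exact add_le_add (abs_mulVec_le_s6 _ _ _) (abs_mulVec_le_s6 _ _ _)
        refine (Finset.sum_le_sum fun j _ => habs j).trans ?_
        rw [Finset.sum_add_distrib]
        refine add_le_add ?_ ?_
        · exact sum_sum_abs_mul_le _ _ _ _ _ hE0 hM1 (hwE (h+1) h1H hH')
            (hwr (h+1) h1H hH') hprev
        · exact sum_sum_abs_mul_le _ _ _ _ _ hE0 hM2 (hvE (h+1) h1H hh1)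
            (hvr (h+1) h1H hh1) hlag
      have harith := arith1 t h ((rw₀ (h+1):ℝ) * E') ((rv₀ (h+1):ℝ) * E')
        (∏ k ∈ Icc 1 h, ((rw₀ k:ℝ) * E')) (∏ k ∈ Icc 1 h, ((rv₀ k:ℝ) * E'))
        (hwfac (h+1) h1H hh1) (hvfac (h+1) h1H hh1) (hPw h hhH) (hPv h hhH)
      have hsumfinal : ∑ j, |hiddenState L w v ψ x (t+1) (h+1) j| ≤
          (((t+1:ℕ)):ℝ)^(h+1) * (∏ k ∈ Icc 1 (h+1), ((rw₀ k:ℝ) * E'))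
            * (∏ k ∈ Icc 1 (h+1), ((rv₀ k:ℝ) * E'))^(t+1-1) := by
        rw [Finset.prod_Icc_succ_top h1H, Finset.prod_Icc_succ_top h1H]
        refine key.trans ?_
        rw [Finset.prod_Icc_succ_top h1H, Finset.prod_Icc_succ_top h1H]
        exact harith
      refine ⟨fun j => ?_, fun _ => hsumfinal⟩
      exact le_trans (Finset.single_le_sum
        (f := fun k => |hiddenState L w v ψ x (t+1) (h+1) k|)
        (fun k _ => abs_nonneg _) (Finset.mem_univ j)) hsumfinal

lemma mulVec_diff_bound {m n : ℕ} (A B : Matrix (Fin m) (Fin n) ℝ) (u u' : Fin n → ℝ)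
    (j : Fin m) :
    |A.mulVec u j - B.mulVec u' j| ≤
      (∑ k, |A j k - B j k| * |u k|) + (∑ k, |A j k| * |u k - u' k|)
      + (∑ k, |A j k - B j k| * |u k - u' k|) := by
  simp only [Matrix.mulVec, dotProduct]
  rw [← Finset.sum_sub_distrib]
  refine (Finset.abs_sum_le_sum_abs _ _).trans ?_
  rw [← Finset.sum_add_distrib, ← Finset.sum_add_distrib]
  exact Finset.sum_le_sum fun k _ => scalar6 _ _ _ _

set_option maxHeartbeats 1600000 in
lemma diffBound
    (H : ℕ) (L : ℕ → ℕ) (hL : ∀ h ≤ H, 1 ≤ L h)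
    (w w' : (h : ℕ) → Matrix (Fin (L h)) (Fin (L (h - 1))) ℝ)
    (v v' : (h : ℕ) → Matrix (Fin (L h)) (Fin (L h)) ℝ)
    (ψ : ℕ → ℝ → ℝ)
    (hψ : ∀ h, 1 ≤ h → h ≤ H - 1 → LipschitzWith 1 (ψ h) ∧ ψ h 0 = 0)
    (x : ℕ → Fin (L 0) → ℝ) (hx : ∀ s j, |x s j| ≤ 1)
    (E' : ℝ) (hE' : 1 ≤ E') (rw₀ rv₀ : ℕ → ℕ)
    (hrw : ∀ h, 1 ≤ h → h ≤ H → 1 ≤ rw₀ h) (hrv : ∀ h, 1 ≤ h → h ≤ H - 1 → 1 ≤ rv₀ h)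
    (hwE : ∀ h, 1 ≤ h → h ≤ H → ∀ j k, |w h j k| ≤ E')
    (hvE : ∀ h, 1 ≤ h → h ≤ H - 1 → ∀ j k, |v h j k| ≤ E')
    (hwr : ∀ h, 1 ≤ h → h ≤ H → nnz (w h) ≤ rw₀ h)
    (hvr : ∀ h, 1 ≤ h → h ≤ H - 1 → nnz (v h) ≤ rv₀ h)
    (δ₂ : ℝ) (hδ₂ : 0 ≤ δ₂)
    (hwclose : ∀ h, 1 ≤ h → h ≤ H → ∀ j k, |w h j k - w' h j k| ≤ δ₂)
    (hvclose : ∀ h, 1 ≤ h → h ≤ H - 1 → ∀ j k, |v h j k - v' h j k| ≤ δ₂) :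
    ∀ t h, h ≤ H - 1 →
      ∑ j, |hiddenState L w v ψ x t h j - hiddenState L w' v' ψ x t h j| ≤
        (t : ℝ) ^ (h + 1) * δ₂ * ((L 0 : ℝ) * (L 1 : ℝ) + ∑ k ∈ Finset.Icc 1 h, (L k : ℝ))
          * (∏ k ∈ Finset.Icc 1 h, (δ₂ * (L k : ℝ) + (rw₀ k : ℝ) * E'))
          * (∏ k ∈ Finset.Icc 1 h, (δ₂ * (L k : ℝ) + (rv₀ k : ℝ) * E')) ^ (t - 1) := by
  have hE0 : (0:ℝ) ≤ E' := by linarith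
  have hsb := stateBound H L w v ψ hψ x hx E' hE' rw₀ rv₀ hrw hrv hwE hvE hwr hvr
  have hwfac : ∀ k, 1 ≤ k → k ≤ H - 1 → (1:ℝ) ≤ (rw₀ k:ℝ) * E' := by
    intro k h1 h2
    have h3 : (1:ℝ) ≤ (rw₀ k:ℝ) := by exact_mod_cast hrw k h1 (le_trans h2 (Nat.sub_le H 1))
    nlinarith
  have hvfac : ∀ k, 1 ≤ k → k ≤ H - 1 → (1:ℝ) ≤ (rv₀ k:ℝ) * E' := by
    intro k h1 h2
    have h3 : (1:ℝ) ≤ (rv₀ k:ℝ) := by exact_mod_cast hrv k h1 h2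
    nlinarith
  have hcfac : ∀ k, 1 ≤ k → k ≤ H - 1 → (1:ℝ) ≤ δ₂ * (L k:ℝ) + (rw₀ k:ℝ) * E' := by
    intro k h1 h2
    have := mul_nonneg hδ₂ (Nat.cast_nonneg (L k) : (0:ℝ) ≤ (L k:ℝ))
    linarith [hwfac k h1 h2]
  have hdfac : ∀ k, 1 ≤ k → k ≤ H - 1 → (1:ℝ) ≤ δ₂ * (L k:ℝ) + (rv₀ k:ℝ) * E' := by
    intro k h1 h2
    have := mul_nonneg hδ₂ (Nat.cast_nonneg (L k) : (0:ℝ) ≤ (L k:ℝ))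
    linarith [hvfac k h1 h2]
  have hPwB : ∀ h, h ≤ H - 1 → (1:ℝ) ≤ ∏ k ∈ Icc 1 h, ((rw₀ k:ℝ) * E') := by
    intro h hh
    refine my_one_le_prod _ _ fun k hk => ?_
    rw [Finset.mem_Icc] at hk
    exact hwfac k hk.1 (le_trans hk.2 hh)
  have hPvB : ∀ h, h ≤ H - 1 → (1:ℝ) ≤ ∏ k ∈ Icc 1 h, ((rv₀ k:ℝ) * E') := by
    intro h hh
    refine my_one_le_prod _ _ fun k hk => ?_
    rw [Finset.mem_Icc] at hk
    exact hvfac k hk.1 (le_trans hk.2 hh)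
  have hPc : ∀ h, h ≤ H - 1 → (1:ℝ) ≤ ∏ k ∈ Icc 1 h, (δ₂ * (L k:ℝ) + (rw₀ k:ℝ) * E') := by
    intro h hh
    refine my_one_le_prod _ _ fun k hk => ?_
    rw [Finset.mem_Icc] at hk
    exact hcfac k hk.1 (le_trans hk.2 hh)
  have hPd : ∀ h, h ≤ H - 1 → (1:ℝ) ≤ ∏ k ∈ Icc 1 h, (δ₂ * (L k:ℝ) + (rv₀ k:ℝ) * E') := by
    intro h hh
    refine my_one_le_prod _ _ fun k hk => ?_
    rw [Finset.mem_Icc] at hk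
    exact hdfac k hk.1 (le_trans hk.2 hh)
  have hBwPc : ∀ h, h ≤ H - 1 →
      (∏ k ∈ Icc 1 h, ((rw₀ k:ℝ) * E')) ≤ ∏ k ∈ Icc 1 h, (δ₂ * (L k:ℝ) + (rw₀ k:ℝ) * E') := by
    intro h hh
    refine Finset.prod_le_prod (fun k hk => ?_) (fun k hk => ?_)
    · exact mul_nonneg (Nat.cast_nonneg _) hE0
    · exact le_add_of_nonneg_left (mul_nonneg hδ₂ (Nat.cast_nonneg _))
  have hBvPd : ∀ h, h ≤ H - 1 →
      (∏ k ∈ Icc 1 h, ((rv₀ k:ℝ) * E')) ≤ ∏ k ∈ Icc 1 h, (δ₂ * (L k:ℝ) + (rv₀ k:ℝ) * E') := by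
    intro h hh
    refine Finset.prod_le_prod (fun k hk => ?_) (fun k hk => ?_)
    · exact mul_nonneg (Nat.cast_nonneg _) hE0
    · exact le_add_of_nonneg_left (mul_nonneg hδ₂ (Nat.cast_nonneg _))
  have hS0 : ∀ h : ℕ, (0:ℝ) ≤ (L 0 : ℝ) * (L 1 : ℝ) + ∑ k ∈ Finset.Icc 1 h, (L k : ℝ) := by
    intro h
    refine add_nonneg (mul_nonneg (Nat.cast_nonneg _) (Nat.cast_nonneg _)) ?_
    exact Finset.sum_nonneg fun k _ => Nat.cast_nonneg _
  have hRHS0 : ∀ (t h : ℕ), h ≤ H - 1 → (0:ℝ) ≤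
      (t : ℝ) ^ (h + 1) * δ₂ * ((L 0 : ℝ) * (L 1 : ℝ) + ∑ k ∈ Finset.Icc 1 h, (L k : ℝ))
        * (∏ k ∈ Finset.Icc 1 h, (δ₂ * (L k : ℝ) + (rw₀ k : ℝ) * E'))
        * (∏ k ∈ Finset.Icc 1 h, (δ₂ * (L k : ℝ) + (rv₀ k : ℝ) * E')) ^ (t - 1) := by
    intro t h hh
    have h1 := hPc h hh
    have h2 := hPd h hh
    have h3 := hS0 h
    have h4 : (0:ℝ) ≤ (t:ℝ)^(h+1) := by positivity
    have h5 : (0:ℝ) ≤ (∏ k ∈ Finset.Icc 1 h, (δ₂ * (L k : ℝ) + (rv₀ k : ℝ) * E')) ^ (t-1) :=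
      pow_nonneg (by linarith) _
    exact mul_nonneg (mul_nonneg (mul_nonneg (mul_nonneg h4 hδ₂) h3) (by linarith)) h5
  have hlay0 : ∀ (t : ℕ) (j : Fin (L 0)),
      hiddenState L w v ψ x t 0 j = hiddenState L w' v' ψ x t 0 j := by
    intro t j; cases t <;> rfl
  intro t
  induction t with
  | zero =>
    intro h hh
    have e : ∑ j, |hiddenState L w v ψ x 0 h j - hiddenState L w' v' ψ x 0 h j| = 0 := by
      simp [hiddenState_zero]
    rw [e]
    exact hRHS0 0 h hh
  | succ t ih =>
    intro h
    induction h with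
    | zero =>
      intro _
      have e : ∑ j, |hiddenState L w v ψ x (t+1) 0 j - hiddenState L w' v' ψ x (t+1) 0 j|
          = 0 := by
        refine Finset.sum_eq_zero fun j _ => ?_
        rw [hlay0, sub_self, abs_zero]
      rw [e]
      exact hRHS0 (t+1) 0 (Nat.zero_le _)
    | succ h ihh =>
      intro hh1
      have hhH : h ≤ H - 1 := Nat.le_of_succ_le hh1
      have h1H : 1 ≤ h + 1 := Nat.succ_le_succ (Nat.zero_le _)
      have hH' : h + 1 ≤ H := le_trans hh1 (Nat.sub_le H 1)
      have hψ' := hψ (h+1) h1H hh1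
      -- split into six double sums
      have hdabs : ∀ j : Fin (L (h+1)),
          |hiddenState L w v ψ x (t+1) (h+1) j - hiddenState L w' v' ψ x (t+1) (h+1) j| ≤
          ((∑ k, |w (h+1) j k - w' (h+1) j k| * |hiddenState L w v ψ x (t+1) h k|)
            + (∑ k, |w (h+1) j k| *
                |hiddenState L w v ψ x (t+1) h k - hiddenState L w' v' ψ x (t+1) h k|)
            + (∑ k, |w (h+1) j k - w' (h+1) j k| *
                |hiddenState L w v ψ x (t+1) h k - hiddenState L w' v' ψ x (t+1) h k|))
          + ((∑ k, |v (h+1) j k - v' (h+1) j k| * |hiddenState L w v ψ x t (h+1) k|)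
            + (∑ k, |v (h+1) j k| *
                |hiddenState L w v ψ x t (h+1) k - hiddenState L w' v' ψ x t (h+1) k|)
            + (∑ k, |v (h+1) j k - v' (h+1) j k| *
                |hiddenState L w v ψ x t (h+1) k - hiddenState L w' v' ψ x t (h+1) k|)) := by
        intro j
        rw [hiddenState_succ_succ, hiddenState_succ_succ]
        refine (abs_lip hψ'.1 _ _).trans ?_
        have e : ((w (h+1)).mulVec (hiddenState L w v ψ x (t+1) h) j
              + (v (h+1)).mulVec (hiddenState L w v ψ x t (h+1)) j)
            - ((w' (h+1)).mulVec (hiddenState L w' v' ψ x (t+1) h) j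
              + (v' (h+1)).mulVec (hiddenState L w' v' ψ x t (h+1)) j)
            = ((w (h+1)).mulVec (hiddenState L w v ψ x (t+1) h) j
              - (w' (h+1)).mulVec (hiddenState L w' v' ψ x (t+1) h) j)
            + ((v (h+1)).mulVec (hiddenState L w v ψ x t (h+1)) j
              - (v' (h+1)).mulVec (hiddenState L w' v' ψ x t (h+1)) j) := by ring
        rw [e]
        refine (abs_add_le _ _).trans ?_
        exact add_le_add (mulVec_diff_bound _ _ _ _ _) (mulVec_diff_bound _ _ _ _ _)
      have hsplit : ∑ j, |hiddenState L w v ψ x (t+1) (h+1) j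
            - hiddenState L w' v' ψ x (t+1) (h+1) j| ≤
          (∑ j, ∑ k, |w (h+1) j k - w' (h+1) j k| * |hiddenState L w v ψ x (t+1) h k|)
          + (∑ j, ∑ k, |w (h+1) j k| *
              |hiddenState L w v ψ x (t+1) h k - hiddenState L w' v' ψ x (t+1) h k|)
          + (∑ j, ∑ k, |w (h+1) j k - w' (h+1) j k| *
              |hiddenState L w v ψ x (t+1) h k - hiddenState L w' v' ψ x (t+1) h k|)
          + (∑ j, ∑ k, |v (h+1) j k - v' (h+1) j k| * |hiddenState L w v ψ x t (h+1) k|)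
          + (∑ j, ∑ k, |v (h+1) j k| *
              |hiddenState L w v ψ x t (h+1) k - hiddenState L w' v' ψ x t (h+1) k|)
          + (∑ j, ∑ k, |v (h+1) j k - v' (h+1) j k| *
              |hiddenState L w v ψ x t (h+1) k - hiddenState L w' v' ψ x t (h+1) k|) := by
        refine (Finset.sum_le_sum fun j _ => hdabs j).trans ?_
        simp only [Finset.sum_add_distrib]
        linarith
      -- the six bounds
      set D1 : ℝ := ∑ k, |hiddenState L w v ψ x (t+1) h k
          - hiddenState L w' v' ψ x (t+1) h k| with hD1def
      set D2 : ℝ := ∑ k, |hiddenState L w v ψ x t (h+1) k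
          - hiddenState L w' v' ψ x t (h+1) k| with hD2def
      set N1 : ℝ := ∑ k, |hiddenState L w v ψ x (t+1) h k| with hN1def
      set N2 : ℝ := ∑ k, |hiddenState L w v ψ x t (h+1) k| with hN2def
      have hD1nn : 0 ≤ D1 := Finset.sum_nonneg fun k _ => abs_nonneg _
      have hD2nn : 0 ≤ D2 := Finset.sum_nonneg fun k _ => abs_nonneg _
      have A1 : ∑ j, ∑ k, |w (h+1) j k - w' (h+1) j k|
            * |hiddenState L w v ψ x (t+1) h k| ≤ δ₂ * (L (h+1) : ℝ) * N1 :=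
        sum_sum_pert_le _ _ _ _ hδ₂ (hwclose (h+1) h1H hH')
      have A2 : ∑ j, ∑ k, |w (h+1) j k| *
            |hiddenState L w v ψ x (t+1) h k - hiddenState L w' v' ψ x (t+1) h k|
          ≤ (rw₀ (h+1) : ℝ) * E' * D1 := by
        refine sum_sum_abs_mul_le _ _ _ _ _ hE0 hD1nn (hwE (h+1) h1H hH')
          (hwr (h+1) h1H hH') fun k => ?_
        exact Finset.single_le_sum
          (f := fun k => |hiddenState L w v ψ x (t+1) h k - hiddenState L w' v' ψ x (t+1) h k|)
          (fun k _ => abs_nonneg _) (Finset.mem_univ k)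
      have A3 : ∑ j, ∑ k, |w (h+1) j k - w' (h+1) j k| *
            |hiddenState L w v ψ x (t+1) h k - hiddenState L w' v' ψ x (t+1) h k|
          ≤ δ₂ * (L (h+1) : ℝ) * D1 :=
        sum_sum_pert_le _ _ _ _ hδ₂ (hwclose (h+1) h1H hH')
      have A4 : ∑ j, ∑ k, |v (h+1) j k - v' (h+1) j k|
            * |hiddenState L w v ψ x t (h+1) k| ≤ δ₂ * (L (h+1) : ℝ) * N2 :=
        sum_sum_pert_le _ _ _ _ hδ₂ (hvclose (h+1) h1H hh1)
      have A5 : ∑ j, ∑ k, |v (h+1) j k| *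
            |hiddenState L w v ψ x t (h+1) k - hiddenState L w' v' ψ x t (h+1) k|
          ≤ (rv₀ (h+1) : ℝ) * E' * D2 := by
        refine sum_sum_abs_mul_le _ _ _ _ _ hE0 hD2nn (hvE (h+1) h1H hh1)
          (hvr (h+1) h1H hh1) fun k => ?_
        exact Finset.single_le_sum
          (f := fun k => |hiddenState L w v ψ x t (h+1) k - hiddenState L w' v' ψ x t (h+1) k|)
          (fun k _ => abs_nonneg _) (Finset.mem_univ k)
      have A6 : ∑ j, ∑ k, |v (h+1) j k - v' (h+1) j k| *
            |hiddenState L w v ψ x t (h+1) k - hiddenState L w' v' ψ x t (h+1) k|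
          ≤ δ₂ * (L (h+1) : ℝ) * D2 :=
        sum_sum_pert_le _ _ _ _ hδ₂ (hvclose (h+1) h1H hh1)
      -- bounds on N2 and D2 (common to both cases)
      have hN2b : N2 ≤ (t : ℝ) ^ (h + 1)
          * (∏ k ∈ Icc 1 (h+1), (δ₂ * (L k:ℝ) + (rw₀ k:ℝ) * E'))
          * (∏ k ∈ Icc 1 (h+1), (δ₂ * (L k:ℝ) + (rv₀ k:ℝ) * E')) ^ (t - 1) := by
        have hs1 := (hsb t (h+1) hh1).2 h1H
        refine hs1.trans ?_
        have h1 := hBwPc (h+1) hh1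
        have h2 := hBvPd (h+1) hh1
        have h0v : (0:ℝ) ≤ ∏ k ∈ Icc 1 (h+1), ((rv₀ k:ℝ) * E') :=
          le_trans zero_le_one (hPvB (h+1) hh1)
        refine mul_le_mul (mul_le_mul_of_nonneg_left h1 (by positivity))
          (mypow_le h0v h2 _) (pow_nonneg h0v _) ?_
        have h3 := hPc (h+1) hh1
        have h4 : (0:ℝ) ≤ (t:ℝ)^(h+1) := by positivity
        nlinarith
      rw [Finset.prod_Icc_succ_top h1H, Finset.prod_Icc_succ_top h1H] at hN2b
      have hD2b := ih (h+1) hh1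
      rw [Finset.prod_Icc_succ_top h1H, Finset.prod_Icc_succ_top h1H,
        Finset.sum_Icc_succ_top h1H, ← add_assoc] at hD2b
      -- goal rewriting
      rw [Finset.prod_Icc_succ_top h1H, Finset.prod_Icc_succ_top h1H,
        Finset.sum_Icc_succ_top h1H, ← add_assoc]
      rcases Nat.eq_zero_or_pos h with rfl | hpos
      · -- h = 0 : layer 1
        have hD1z : D1 = 0 := by
          rw [hD1def]
          refine Finset.sum_eq_zero fun k _ => ?_
          rw [hlay0, sub_self, abs_zero]
        have hN1b : N1 ≤ (L 0 : ℝ) := by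
          rw [hN1def]
          calc ∑ k, |hiddenState L w v ψ x (t+1) 0 k| ≤ ∑ _k : Fin (L 0), (1:ℝ) := by
                refine Finset.sum_le_sum fun k _ => ?_
                rw [hiddenState_succ_zero]
                exact hx (t+1) k
            _ = (L 0 : ℝ) := by simp
        have harith := arith2a t δ₂ ((L 0 : ℝ) * (L 1 : ℝ)) ((L (0+1) : ℝ))
          (∏ k ∈ Icc 1 0, (δ₂ * (L k:ℝ) + (rw₀ k:ℝ) * E'))
          (∏ k ∈ Icc 1 0, (δ₂ * (L k:ℝ) + (rv₀ k:ℝ) * E'))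
          (δ₂ * (L (0+1):ℝ) + (rw₀ (0+1):ℝ) * E')
          (δ₂ * (L (0+1):ℝ) + (rv₀ (0+1):ℝ) * E')
          hδ₂ (mul_nonneg (Nat.cast_nonneg _) (Nat.cast_nonneg _)) (Nat.cast_nonneg _)
          (hPc 0 (Nat.zero_le _)) (hPd 0 (Nat.zero_le _))
          (hcfac (0+1) h1H hh1) (hdfac (0+1) h1H hh1)
        have hSum0 : ∑ k ∈ Finset.Icc 1 0, (L k : ℝ) = 0 := by
          rw [Finset.Icc_eq_empty (by omega)]; simp
        rw [hSum0, add_zero] at hD2b ⊢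
        have A1' : δ₂ * (L (0+1) : ℝ) * N1 ≤ δ₂ * ((L 0 : ℝ) * (L 1 : ℝ)) := by
          have h5 : δ₂ * (L (0+1) : ℝ) * N1 ≤ δ₂ * (L (0+1) : ℝ) * (L 0 : ℝ) :=
            mul_le_mul_of_nonneg_left hN1b (mul_nonneg hδ₂ (Nat.cast_nonneg _))
          have h6 : δ₂ * (L (0+1) : ℝ) * (L 0 : ℝ) = δ₂ * ((L 0 : ℝ) * (L 1 : ℝ)) := by
            norm_num
            ring
          linarith
        have A4' : δ₂ * (L (0+1) : ℝ) * N2 ≤ δ₂ * (L (0+1) : ℝ) *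
            ((t : ℝ) ^ (0 + 1)
              * ((∏ k ∈ Icc 1 0, (δ₂ * (L k:ℝ) + (rw₀ k:ℝ) * E'))
                  * (δ₂ * (L (0+1):ℝ) + (rw₀ (0+1):ℝ) * E'))
              * ((∏ k ∈ Icc 1 0, (δ₂ * (L k:ℝ) + (rv₀ k:ℝ) * E'))
                  * (δ₂ * (L (0+1):ℝ) + (rv₀ (0+1):ℝ) * E')) ^ (t - 1)) :=
          mul_le_mul_of_nonneg_left hN2b (mul_nonneg hδ₂ (Nat.cast_nonneg _))
        have A5' : (rv₀ (0+1) : ℝ) * E' * D2 ≤ (rv₀ (0+1) : ℝ) * E' *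
            ((t : ℝ) ^ (0 + 1 + 1) * δ₂ * ((L 0 : ℝ) * (L 1 : ℝ) + (L (0+1) : ℝ))
              * ((∏ k ∈ Icc 1 0, (δ₂ * (L k:ℝ) + (rw₀ k:ℝ) * E'))
                  * (δ₂ * (L (0+1):ℝ) + (rw₀ (0+1):ℝ) * E'))
              * ((∏ k ∈ Icc 1 0, (δ₂ * (L k:ℝ) + (rv₀ k:ℝ) * E'))
                  * (δ₂ * (L (0+1):ℝ) + (rv₀ (0+1):ℝ) * E')) ^ (t - 1)) :=
          mul_le_mul_of_nonneg_left hD2b (mul_nonneg (Nat.cast_nonneg _) hE0)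
        have A6' : δ₂ * (L (0+1) : ℝ) * D2 ≤ δ₂ * (L (0+1) : ℝ) *
            ((t : ℝ) ^ (0 + 1 + 1) * δ₂ * ((L 0 : ℝ) * (L 1 : ℝ) + (L (0+1) : ℝ))
              * ((∏ k ∈ Icc 1 0, (δ₂ * (L k:ℝ) + (rw₀ k:ℝ) * E'))
                  * (δ₂ * (L (0+1):ℝ) + (rw₀ (0+1):ℝ) * E'))
              * ((∏ k ∈ Icc 1 0, (δ₂ * (L k:ℝ) + (rv₀ k:ℝ) * E'))
                  * (δ₂ * (L (0+1):ℝ) + (rv₀ (0+1):ℝ) * E')) ^ (t - 1)) :=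
          mul_le_mul_of_nonneg_left hD2b (mul_nonneg hδ₂ (Nat.cast_nonneg _))
        rw [hD1z] at A2 A3
        linarith [hsplit, A1, A1', A2, A3, A4, A4', A5, A5', A6, A6', harith]
      · -- h ≥ 1
        have hN1b : N1 ≤ ((t+1:ℕ) : ℝ) ^ h
            * (∏ k ∈ Icc 1 h, (δ₂ * (L k:ℝ) + (rw₀ k:ℝ) * E'))
            * (∏ k ∈ Icc 1 h, (δ₂ * (L k:ℝ) + (rv₀ k:ℝ) * E')) ^ (t + 1 - 1) := by
          have hs1 := (hsb (t+1) h hhH).2 hpos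
          refine hs1.trans ?_
          have h1 := hBwPc h hhH
          have h2 := hBvPd h hhH
          have h0v : (0:ℝ) ≤ ∏ k ∈ Icc 1 h, ((rv₀ k:ℝ) * E') :=
            le_trans zero_le_one (hPvB h hhH)
          refine mul_le_mul (mul_le_mul_of_nonneg_left h1 (by positivity))
            (mypow_le h0v h2 _) (pow_nonneg h0v _) ?_
          have := hPc h hhH
          have h4 : (0:ℝ) ≤ ((t+1:ℕ):ℝ)^h := by positivity
          nlinarith
        have hD1b := ihh hhH
        have harith := arith2b t h δ₂
          ((L 0 : ℝ) * (L 1 : ℝ) + ∑ k ∈ Finset.Icc 1 h, (L k : ℝ)) ((L (h+1) : ℝ))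
          (∏ k ∈ Icc 1 h, (δ₂ * (L k:ℝ) + (rw₀ k:ℝ) * E'))
          (∏ k ∈ Icc 1 h, (δ₂ * (L k:ℝ) + (rv₀ k:ℝ) * E'))
          (δ₂ * (L (h+1):ℝ) + (rw₀ (h+1):ℝ) * E')
          (δ₂ * (L (h+1):ℝ) + (rv₀ (h+1):ℝ) * E')
          hδ₂ (hS0 h) (Nat.cast_nonneg _)
          (hPc h hhH) (hPd h hhH) (hcfac (h+1) h1H hh1) (hdfac (h+1) h1H hh1)
        have A1' : δ₂ * (L (h+1) : ℝ) * N1 ≤ δ₂ * (L (h+1) : ℝ) *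
            (((t+1:ℕ) : ℝ) ^ h
              * (∏ k ∈ Icc 1 h, (δ₂ * (L k:ℝ) + (rw₀ k:ℝ) * E'))
              * (∏ k ∈ Icc 1 h, (δ₂ * (L k:ℝ) + (rv₀ k:ℝ) * E')) ^ (t + 1 - 1)) :=
          mul_le_mul_of_nonneg_left hN1b (mul_nonneg hδ₂ (Nat.cast_nonneg _))
        have A2' : (rw₀ (h+1) : ℝ) * E' * D1 ≤ (rw₀ (h+1) : ℝ) * E' *
            (((t+1:ℕ) : ℝ) ^ (h + 1) * δ₂
              * ((L 0 : ℝ) * (L 1 : ℝ) + ∑ k ∈ Finset.Icc 1 h, (L k : ℝ))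
              * (∏ k ∈ Icc 1 h, (δ₂ * (L k:ℝ) + (rw₀ k:ℝ) * E'))
              * (∏ k ∈ Icc 1 h, (δ₂ * (L k:ℝ) + (rv₀ k:ℝ) * E')) ^ (t + 1 - 1)) :=
          mul_le_mul_of_nonneg_left hD1b (mul_nonneg (Nat.cast_nonneg _) hE0)
        have A3' : δ₂ * (L (h+1) : ℝ) * D1 ≤ δ₂ * (L (h+1) : ℝ) *
            (((t+1:ℕ) : ℝ) ^ (h + 1) * δ₂
              * ((L 0 : ℝ) * (L 1 : ℝ) + ∑ k ∈ Finset.Icc 1 h, (L k : ℝ))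
              * (∏ k ∈ Icc 1 h, (δ₂ * (L k:ℝ) + (rw₀ k:ℝ) * E'))
              * (∏ k ∈ Icc 1 h, (δ₂ * (L k:ℝ) + (rv₀ k:ℝ) * E')) ^ (t + 1 - 1)) :=
          mul_le_mul_of_nonneg_left hD1b (mul_nonneg hδ₂ (Nat.cast_nonneg _))
        have A4' : δ₂ * (L (h+1) : ℝ) * N2 ≤ δ₂ * (L (h+1) : ℝ) *
            ((t : ℝ) ^ (h + 1)
              * ((∏ k ∈ Icc 1 h, (δ₂ * (L k:ℝ) + (rw₀ k:ℝ) * E'))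
                  * (δ₂ * (L (h+1):ℝ) + (rw₀ (h+1):ℝ) * E'))
              * ((∏ k ∈ Icc 1 h, (δ₂ * (L k:ℝ) + (rv₀ k:ℝ) * E'))
                  * (δ₂ * (L (h+1):ℝ) + (rv₀ (h+1):ℝ) * E')) ^ (t - 1)) :=
          mul_le_mul_of_nonneg_left hN2b (mul_nonneg hδ₂ (Nat.cast_nonneg _))
        have A5' : (rv₀ (h+1) : ℝ) * E' * D2 ≤ (rv₀ (h+1) : ℝ) * E' *
            ((t : ℝ) ^ (h + 1 + 1) * δ₂
              * (((L 0 : ℝ) * (L 1 : ℝ) + ∑ k ∈ Finset.Icc 1 h, (L k : ℝ)) + (L (h+1) : ℝ))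
              * ((∏ k ∈ Icc 1 h, (δ₂ * (L k:ℝ) + (rw₀ k:ℝ) * E'))
                  * (δ₂ * (L (h+1):ℝ) + (rw₀ (h+1):ℝ) * E'))
              * ((∏ k ∈ Icc 1 h, (δ₂ * (L k:ℝ) + (rv₀ k:ℝ) * E'))
                  * (δ₂ * (L (h+1):ℝ) + (rv₀ (h+1):ℝ) * E')) ^ (t - 1)) :=
          mul_le_mul_of_nonneg_left hD2b (mul_nonneg (Nat.cast_nonneg _) hE0)
        have A6' : δ₂ * (L (h+1) : ℝ) * D2 ≤ δ₂ * (L (h+1) : ℝ) *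
            ((t : ℝ) ^ (h + 1 + 1) * δ₂
              * (((L 0 : ℝ) * (L 1 : ℝ) + ∑ k ∈ Finset.Icc 1 h, (L k : ℝ)) + (L (h+1) : ℝ))
              * ((∏ k ∈ Icc 1 h, (δ₂ * (L k:ℝ) + (rw₀ k:ℝ) * E'))
                  * (δ₂ * (L (h+1):ℝ) + (rw₀ (h+1):ℝ) * E'))
              * ((∏ k ∈ Icc 1 h, (δ₂ * (L k:ℝ) + (rv₀ k:ℝ) * E'))
                  * (δ₂ * (L (h+1):ℝ) + (rv₀ (h+1):ℝ) * E')) ^ (t - 1)) :=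
          mul_le_mul_of_nonneg_left hD2b (mul_nonneg hδ₂ (Nat.cast_nonneg _))
        linarith [hsplit, A1, A1', A2, A2', A3, A3', A4, A4', A5, A5', A6, A6', harith]


/-- Lemma (hidden-state difference between a sparse RNN `β' = (w, v)` with `nnz(w^h) ≤ r_{w_h}`,
`nnz(v^h) ≤ r_{v_h}` and entries bounded by `E' ≥ 1`, and an arbitrary RNN `β̃ = (w', v')`
with `|β'_j - β̃_j| ≤ δ₂` for every index `j`): for every `t ≥ 1` and hidden layer
`1 ≤ i ≤ H-1`,
`∑_j |z_t^i(β')(j) - z_t^i(β̃)(j)| ≤ t^{i+1} δ₂ (p L₁ + Σ_{k=1}^i L_k)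
  (∏_{k=1}^i [δ₂ L_k + r_{w_k} E']) (∏_{k=1}^i [δ₂ L_k + r_{v_k} E'])^{t-1}`. -/
theorem hiddenState_diff_bound_dense_perturbation
    (H : ℕ) (hH : 2 ≤ H)
    (L : ℕ → ℕ) (hL : ∀ h ≤ H, 1 ≤ L h)
    (w w' : (h : ℕ) → Matrix (Fin (L h)) (Fin (L (h - 1))) ℝ)
    (v v' : (h : ℕ) → Matrix (Fin (L h)) (Fin (L h)) ℝ)
    (ψ : ℕ → ℝ → ℝ)
    (hψ : ∀ h, 1 ≤ h → h ≤ H - 1 → LipschitzWith 1 (ψ h) ∧ ψ h 0 = 0)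
    (x : ℕ → Fin (L 0) → ℝ) (hx : ∀ s j, |x s j| ≤ 1)
    (E' : ℝ) (hE' : 1 ≤ E')
    (rw rv : ℕ → ℕ)
    (hrw : ∀ h, 1 ≤ h → h ≤ H → 1 ≤ rw h) (hrv : ∀ h, 1 ≤ h → h ≤ H - 1 → 1 ≤ rv h)
    (hwE : ∀ h, 1 ≤ h → h ≤ H → ∀ j k, |w h j k| ≤ E')
    (hvE : ∀ h, 1 ≤ h → h ≤ H - 1 → ∀ j k, |v h j k| ≤ E')
    (hwr : ∀ h, 1 ≤ h → h ≤ H → nnz (w h) ≤ rw h)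
    (hvr : ∀ h, 1 ≤ h → h ≤ H - 1 → nnz (v h) ≤ rv h)
    (δ₂ : ℝ) (hδ₂ : 0 ≤ δ₂)
    (hwclose : ∀ h, 1 ≤ h → h ≤ H → ∀ j k, |w h j k - w' h j k| ≤ δ₂)
    (hvclose : ∀ h, 1 ≤ h → h ≤ H - 1 → ∀ j k, |v h j k - v' h j k| ≤ δ₂)
    (t : ℕ) (ht : 1 ≤ t) (i : ℕ) (hi1 : 1 ≤ i) (hi2 : i ≤ H - 1) :
    ∑ j, |hiddenState L w v ψ x t i j - hiddenState L w' v' ψ x t i j| ≤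
      (t : ℝ) ^ (i + 1) * δ₂ * ((L 0 : ℝ) * (L 1 : ℝ) + ∑ k ∈ Finset.Icc 1 i, (L k : ℝ))
        * (∏ k ∈ Finset.Icc 1 i, (δ₂ * (L k : ℝ) + (rw k : ℝ) * E'))
        * (∏ k ∈ Finset.Icc 1 i, (δ₂ * (L k : ℝ) + (rv k : ℝ) * E')) ^ (t - 1) := by
  exact diffBound H L hL w w' v v' ψ hψ x hx E' hE' rw rv hrw hrv hwE hvE hwr hvr
    δ₂ hδ₂ hwclose hvclose t i hi2
end

section
/- Let H ≥ 2 be an integer, E ≥ 1 a real number, and rw_1, …, rw_{H−1}, rv_1, …, rv_{H−1} real numbers each ≥ 1. Suppose O(t,i) ≥ 0 is defined for all integers t ≥ 1 and 1 ≤ i ≤ H−1 and satisfies: O(1,i) ≤ E^i · Π_{k=1}^{i} rw_k for all 1 ≤ i ≤ H−1; O(t,1) ≤ E·rw_1 + E·rv_1·O(t−1,1) for all t ≥ 2; and O(t,i) ≤ E·rw_i·O(t,i−1) + E·rv_i·O(t−1,i) for all t ≥ 2 and 2 ≤ i ≤ H−1. Then O(t,i) ≤ t^i · (Π_{k=1}^{i}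 rw_k) · (Π_{k=1}^{i} rv_k)^{t−1} · E^{t·i} for all t ≥ 1 and 1 ≤ i ≤ H−1. -/
open Finset

/-- If the nonnegative family `O(t,i)` (for `t ≥ 1`, `1 ≤ i ≤ H-1`) satisfies the recursive
bounds `O(1,i) ≤ E^i ∏_{k=1}^i rw_k`, `O(t,1) ≤ E rw_1 + E rv_1 O(t-1,1)` for `t ≥ 2`, and
`O(t,i) ≤ E rw_i O(t,i-1) + E rv_i O(t-1,i)` for `t ≥ 2`, `2 ≤ i ≤ H-1`, then
`O(t,i) ≤ t^i (∏_{k=1}^i rw_k) (∏_{k=1}^i rv_k)^{t-1} E^{t i}` for all `t ≥ 1`,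
`1 ≤ i ≤ H-1`. -/
theorem recurrence_bound
    (H : ℕ) (hH : 2 ≤ H) (E : ℝ) (hE : 1 ≤ E)
    (rw rv : ℕ → ℝ)
    (hrw : ∀ k, 1 ≤ k → k ≤ H - 1 → 1 ≤ rw k)
    (hrv : ∀ k, 1 ≤ k → k ≤ H - 1 → 1 ≤ rv k)
    (O : ℕ → ℕ → ℝ)
    (hO : ∀ t i, 1 ≤ t → 1 ≤ i → i ≤ H - 1 → 0 ≤ O t i)
    (h1 : ∀ i, 1 ≤ i → i ≤ H - 1 → O 1 i ≤ E ^ i * ∏ k ∈ Finset.Icc 1 i, rw k)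
    (h2 : ∀ t, 2 ≤ t → O t 1 ≤ E * rw 1 + E * rv 1 * O (t - 1) 1)
    (h3 : ∀ t i, 2 ≤ t → 2 ≤ i → i ≤ H - 1 →
      O t i ≤ E * rw i * O t (i - 1) + E * rv i * O (t - 1) i) :
    ∀ t i, 1 ≤ t → 1 ≤ i → i ≤ H - 1 →
      O t i ≤ (t : ℝ) ^ i * (∏ k ∈ Finset.Icc 1 i, rw k)
        * (∏ k ∈ Finset.Icc 1 i, rv k) ^ (t - 1) * E ^ (t * i) := by
  have hE0 : (0:ℝ) ≤ E := le_trans zero_le_one hE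
  have hW : ∀ i, i ≤ H - 1 → 1 ≤ ∏ k ∈ Finset.Icc 1 i, rw k := by
    intro i hi
    calc (1:ℝ) = ∏ k ∈ Finset.Icc 1 i, (1:ℝ) := by simp
    _ ≤ ∏ k ∈ Finset.Icc 1 i, rw k := by
        apply Finset.prod_le_prod (fun k _ => zero_le_one)
        intro k hk
        simp only [Finset.mem_Icc] at hk
        exact hrw k hk.1 (le_trans hk.2 hi)
  have hV : ∀ i, i ≤ H - 1 → 1 ≤ ∏ k ∈ Finset.Icc 1 i, rv k := by
    intro i hi
    calc (1:ℝ) = ∏ k ∈ Finset.Icc 1 i, (1:ℝ) := by simp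
    _ ≤ ∏ k ∈ Finset.Icc 1 i, rv k := by
        apply Finset.prod_le_prod (fun k _ => zero_le_one)
        intro k hk
        simp only [Finset.mem_Icc] at hk
        exact hrv k hk.1 (le_trans hk.2 hi)
  intro t i ht hi hiH
  revert i
  induction t, ht using Nat.le_induction with
  | base =>
    intro i hi hiH
    have := h1 i hi hiH
    simpa [mul_comm] using this
  | succ t ht IHt =>
    intro i hi
    induction i, hi using Nat.le_induction with
    | base =>
      intro hiH
      have hb := h2 (t+1) (by omega)
      simp only [Nat.add_sub_cancel] at hb
      have hIH := IHt 1 le_rfl hiH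
      simp only [pow_one, mul_one, Finset.Icc_self, Finset.prod_singleton] at hIH ⊢
      have hrw1 : (1:ℝ) ≤ rw 1 := hrw 1 le_rfl hiH
      have hrv1 : (1:ℝ) ≤ rv 1 := hrv 1 le_rfl hiH
      have hrv1t : (1:ℝ) ≤ rv 1 ^ t := one_le_pow₀ hrv1
      have hEt1 : E ≤ E ^ (t+1) := by
        calc E = E ^ 1 := (pow_one E).symm
        _ ≤ E ^ (t+1) := pow_le_pow_right₀ hE (by omega)
      have hA : E * rw 1 ≤ rw 1 * rv 1 ^ t * E ^ (t+1) := by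
        nlinarith [mul_le_mul_of_nonneg_left hEt1 (by linarith : (0:ℝ) ≤ rw 1),
          mul_le_mul_of_nonneg_left hrv1t (by positivity : (0:ℝ) ≤ rw 1 * E ^ (t+1))]
      have hOt1 : 0 ≤ O t 1 := hO t 1 ht le_rfl hiH
      have hpow : rv 1 * rv 1 ^ (t-1) = rv 1 ^ t := by
        rw [← pow_succ']
        congr 1
        omega
      have hB : E * rv 1 * O t 1 ≤ (t:ℝ) * rw 1 * rv 1 ^ t * E ^ (t+1) := by
        have := mul_le_mul_of_nonneg_left hIH (by positivity : (0:ℝ) ≤ E * rv 1)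
        calc E * rv 1 * O t 1 ≤ E * rv 1 * ((t:ℝ) * rw 1 * rv 1 ^ (t-1) * E ^ t) := this
        _ = (t:ℝ) * rw 1 * (rv 1 * rv 1 ^ (t-1)) * (E * E ^ t) := by ring
        _ = (t:ℝ) * rw 1 * rv 1 ^ t * E ^ (t+1) := by
            rw [hpow, ← pow_succ']
      calc O (t+1) 1 ≤ E * rw 1 + E * rv 1 * O t 1 := hb
      _ ≤ rw 1 * rv 1 ^ t * E ^ (t+1) + (t:ℝ) * rw 1 * rv 1 ^ t * E ^ (t+1) := by
          linarith
      _ = ((t:ℕ)+1:ℝ) * rw 1 * rv 1 ^ t * E ^ (t+1) := by ring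
      _ = (((t+1:ℕ)):ℝ) * rw 1 * rv 1 ^ t * E ^ (t+1) := by push_cast; ring
    | succ i hi IHi =>
      intro hiH
      have hiH' : i ≤ H - 1 := by omega
      have hIHi := IHi hiH'
      have hIHt := IHt (i+1) (by omega) hiH
      have hrec := h3 (t+1) (i+1) (by omega) (by omega) hiH
      simp only [Nat.add_sub_cancel] at hrec
      -- abbreviations
      set Wi := ∏ k ∈ Finset.Icc 1 i, rw k with hWi
      set Vi := ∏ k ∈ Finset.Icc 1 i, rv k with hVi
      have hPw : ∏ k ∈ Finset.Icc 1 (i+1), rw k = Wi * rw (i+1) :=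
        Finset.prod_Icc_succ_top (by omega) rw
      have hPv : ∏ k ∈ Finset.Icc 1 (i+1), rv k = Vi * rv (i+1) :=
        Finset.prod_Icc_succ_top (by omega) rv
      have hWi1 : (1:ℝ) ≤ Wi := hW i hiH'
      have hVi1 : (1:ℝ) ≤ Vi := hV i hiH'
      have hrwi : (1:ℝ) ≤ rw (i+1) := hrw (i+1) (by omega) hiH
      have hrvi : (1:ℝ) ≤ rv (i+1) := hrv (i+1) (by omega) hiH
      have hT : (0:ℝ) ≤ (t:ℝ) + 1 := by positivity
      -- first term bound
      have hO1 : O (t+1) i ≤ ((t:ℝ)+1) ^ i * Wi * Vi ^ t * E ^ ((t+1)*i) := by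
        have := hIHi
        simp only [Nat.add_sub_cancel] at this
        push_cast at this ⊢
        exact this
      have hO2 : O t (i+1) ≤ (t:ℝ) ^ (i+1) * (Wi * rw (i+1)) * (Vi * rv (i+1)) ^ (t-1)
          * E ^ (t*(i+1)) := by
        have := hIHt
        rw [hPw, hPv] at this
        exact this
      have hfirst : E * rw (i+1) * O (t+1) i ≤
          ((t:ℝ)+1) ^ i * (Wi * rw (i+1)) * (Vi * rv (i+1)) ^ t * E ^ ((t+1)*(i+1)) := by
        have step1 : E * rw (i+1) * O (t+1) i ≤
            E * rw (i+1) * (((t:ℝ)+1) ^ i * Wi * Vi ^ t * E ^ ((t+1)*i)) :=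
          mul_le_mul_of_nonneg_left hO1 (by positivity)
        have hexp : E ^ ((t+1)*(i+1)) = E ^ ((t+1)*i) * E * E ^ t := by
          rw [← pow_succ, ← pow_add]
          congr 1
          ring
        have hone : (1:ℝ) ≤ rv (i+1) ^ t * E ^ t := by
          have h1' : (1:ℝ) ≤ rv (i+1) ^ t := one_le_pow₀ hrvi
          have h2' : (1:ℝ) ≤ E ^ t := one_le_pow₀ hE
          nlinarith
        calc E * rw (i+1) * O (t+1) i
            ≤ E * rw (i+1) * (((t:ℝ)+1) ^ i * Wi * Vi ^ t * E ^ ((t+1)*i)) := step1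
        _ = ((t:ℝ)+1) ^ i * (Wi * rw (i+1)) * Vi ^ t * (E ^ ((t+1)*i) * E) * 1 := by ring
        _ ≤ ((t:ℝ)+1) ^ i * (Wi * rw (i+1)) * Vi ^ t * (E ^ ((t+1)*i) * E)
              * (rv (i+1) ^ t * E ^ t) := by
            apply mul_le_mul_of_nonneg_left hone
            positivity
        _ = ((t:ℝ)+1) ^ i * (Wi * rw (i+1)) * (Vi ^ t * rv (i+1) ^ t)
              * (E ^ ((t+1)*i) * E * E ^ t) := by ring
        _ = ((t:ℝ)+1) ^ i * (Wi * rw (i+1)) * (Vi * rv (i+1)) ^ t * E ^ ((t+1)*(i+1)) := by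
            rw [hexp, mul_pow]
      have hsecond : E * rv (i+1) * O t (i+1) ≤
          (t:ℝ) ^ (i+1) * (Wi * rw (i+1)) * (Vi * rv (i+1)) ^ t * E ^ ((t+1)*(i+1)) := by
        have step1 : E * rv (i+1) * O t (i+1) ≤
            E * rv (i+1) * ((t:ℝ) ^ (i+1) * (Wi * rw (i+1)) * (Vi * rv (i+1)) ^ (t-1)
              * E ^ (t*(i+1))) :=
          mul_le_mul_of_nonneg_left hO2 (by positivity)
        have hVV : rv (i+1) * (Vi * rv (i+1)) ^ (t-1) ≤ (Vi * rv (i+1)) ^ t := by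
          have h1' : rv (i+1) ≤ Vi * rv (i+1) := by nlinarith
          have h2' : (Vi * rv (i+1)) ^ (t-1) * (Vi * rv (i+1)) = (Vi * rv (i+1)) ^ t := by
            rw [← pow_succ]
            congr 1
            omega
          calc rv (i+1) * (Vi * rv (i+1)) ^ (t-1)
              ≤ (Vi * rv (i+1)) * (Vi * rv (i+1)) ^ (t-1) := by
                apply mul_le_mul_of_nonneg_right h1'
                positivity
          _ = (Vi * rv (i+1)) ^ t := by rw [mul_comm]; exact h2'
        have hEE : E * E ^ (t*(i+1)) ≤ E ^ ((t+1)*(i+1)) := by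
          rw [← pow_succ']
          apply pow_le_pow_right₀ hE
          nlinarith [Nat.one_le_iff_ne_zero.mpr (by omega : i+1 ≠ 0)]
        calc E * rv (i+1) * O t (i+1)
            ≤ E * rv (i+1) * ((t:ℝ) ^ (i+1) * (Wi * rw (i+1)) * (Vi * rv (i+1)) ^ (t-1)
              * E ^ (t*(i+1))) := step1
        _ = (t:ℝ) ^ (i+1) * (Wi * rw (i+1)) * (rv (i+1) * (Vi * rv (i+1)) ^ (t-1))
              * (E * E ^ (t*(i+1))) := by ring
        _ ≤ (t:ℝ) ^ (i+1) * (Wi * rw (i+1)) * ((Vi * rv (i+1)) ^ t)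
              * (E * E ^ (t*(i+1))) := by
            apply mul_le_mul_of_nonneg_right
            · apply mul_le_mul_of_nonneg_left hVV
              positivity
            · positivity
        _ ≤ (t:ℝ) ^ (i+1) * (Wi * rw (i+1)) * ((Vi * rv (i+1)) ^ t)
              * E ^ ((t+1)*(i+1)) := by
            apply mul_le_mul_of_nonneg_left hEE
            positivity
      have hsum : ((t:ℝ)+1) ^ i + (t:ℝ) ^ (i+1) ≤ ((t:ℝ)+1) ^ (i+1) := by
        have h1' : (t:ℝ) ^ i ≤ ((t:ℝ)+1) ^ i := by
          apply pow_le_pow_left₀ (by positivity)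
          linarith
        have : (t:ℝ) ^ (i+1) = (t:ℝ) * (t:ℝ) ^ i := by rw [pow_succ]; ring
        rw [this, pow_succ]
        nlinarith [pow_nonneg (by positivity : (0:ℝ) ≤ (t:ℝ)) i]
      have hC : (0:ℝ) ≤ (Wi * rw (i+1)) * (Vi * rv (i+1)) ^ t * E ^ ((t+1)*(i+1)) := by
        positivity
      calc O (t+1) (i+1) ≤ E * rw (i+1) * O (t+1) i + E * rv (i+1) * O t (i+1) := hrec
      _ ≤ (((t:ℝ)+1) ^ i + (t:ℝ) ^ (i+1)) * ((Wi * rw (i+1)) * (Vi * rv (i+1)) ^ t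
            * E ^ ((t+1)*(i+1))) := by
          have e1 : (((t:ℝ)+1) ^ i + (t:ℝ) ^ (i+1)) * ((Wi * rw (i+1)) * (Vi * rv (i+1)) ^ t
              * E ^ ((t+1)*(i+1)))
            = ((t:ℝ)+1) ^ i * (Wi * rw (i+1)) * (Vi * rv (i+1)) ^ t * E ^ ((t+1)*(i+1))
              + (t:ℝ) ^ (i+1) * (Wi * rw (i+1)) * (Vi * rv (i+1)) ^ t * E ^ ((t+1)*(i+1)) := by
            ring
          rw [e1]
          linarith
      _ ≤ ((t:ℝ)+1) ^ (i+1) * ((Wi * rw (i+1)) * (Vi * rv (i+1)) ^ t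
            * E ^ ((t+1)*(i+1))) := by
          exact mul_le_mul_of_nonneg_right hsum hC
      _ = (((t+1:ℕ)):ℝ) ^ (i+1) * (∏ k ∈ Finset.Icc 1 (i+1), rw k)
            * (∏ k ∈ Finset.Icc 1 (i+1), rv k) ^ ((t+1)-1) * E ^ ((t+1)*(i+1)) := by
          rw [hPw, hPv, Nat.add_sub_cancel]
          push_cast
          ring
end

section
/- Let H ≥ 2 be an integer, E ≥ 1 and δ ≥ 0 real numbers, and rw_1, …, rw_{H−1}, rv_1, …, rv_{H−1} real numbers each ≥ 1. Suppose O(t,i) ≥ 0 and D(t,i) ≥ 0 are defined for all integers t ≥ 1 and 1 ≤ i ≤ H−1 and satisfy: O(t,i) ≤ t^i · (Π_{k=1}^{i} rw_k) · (Π_{k=1}^{i} rv_k)^{t−1} · E^{t·i} for all t, i; D(1,i) ≤ i·δ·E^{i−1}·Π_{k=1}^{i} rw_k for all i; D(t,1) ≤ rw_1·δ + rv_1·δ·O(t−1,1) + rv_1·E·D(t−1,1) for all t ≥ 2; and D(t,i) ≤ rw_i·δ·O(t,i−1) + rw_i·E·D(t,i−1) + rv_i·δ·O(t−1,i) + rv_i·E·D(t−1,i)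 for all t ≥ 2 and 2 ≤ i ≤ H−1. Then D(t,i) ≤ t^{i+1} · i · δ · (Π_{k=1}^{i} rw_k) · (Π_{k=1}^{i} rv_k)^{t−1} · E^{(i+1)t−2} for all t ≥ 1 and 1 ≤ i ≤ H−1. -/
open Finset

private lemma nat_sub_two {X Y : ℕ} (h : X = Y + 2) : X - 2 = Y := by omega

private lemma aux_mono {a d B X Y u v : ℝ} (ha : 0 ≤ a) (hd : 0 ≤ d) (hB : 0 ≤ B)
    (hX : 0 ≤ X) (hXY : X ≤ Y) (hu : 0 ≤ u) (huv : u ≤ v) :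
    a * (d * B * X * u) ≤ a * (d * B * Y * v) := by
  have h1 : d * B * X ≤ d * B * Y := mul_le_mul_of_nonneg_left hXY (mul_nonneg hd hB)
  have h2 : d * B * X * u ≤ d * B * Y * v :=
    mul_le_mul h1 huv hu (mul_nonneg (mul_nonneg hd hB) (hX.trans hXY))
  exact mul_le_mul_of_nonneg_left h2 ha

private lemma coeffB (m s : ℕ) :
    (s+1+1)^(m+1) + (m+1)*(s+1+1)^(m+1+1) + (s+1)^(m+1+1) + (m+1+1)*(s+1)^(m+1+1+1)
      ≤ (m+1+1)*(s+1+1)^(m+1+1+1) := by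
  have hb : (s+1)^(m+1) ≤ (s+1+1)^(m+1) := Nat.pow_le_pow_left (by omega) _
  set a := (s+1+1)^(m+1) with ha
  set b := (s+1)^(m+1) with hbdef
  have e1 : (s+1+1)^(m+1+1) = a*(s+1+1) := pow_succ _ _
  have e2 : (s+1+1)^(m+1+1+1) = a*(s+1+1)*(s+1+1) := by rw [← e1]; exact pow_succ _ _
  have e3 : (s+1)^(m+1+1) = b*(s+1) := pow_succ _ _
  have e4 : (s+1)^(m+1+1+1) = b*(s+1)*(s+1) := by rw [← e3]; exact pow_succ _ _
  rw [e1, e2, e3, e4]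
  have k1 : a + (m+1)*(a*(s+1+1)) ≤ (m+1+1)*(a*(s+1+1)) := by
    have h : a ≤ a*(s+1+1) := Nat.le_mul_of_pos_right a (by omega)
    calc a + (m+1)*(a*(s+1+1)) ≤ a*(s+1+1) + (m+1)*(a*(s+1+1)) := Nat.add_le_add_right h _
      _ = (m+1+1)*(a*(s+1+1)) := by ring
  have k2 : b*(s+1) + (m+1+1)*(b*(s+1)*(s+1)) ≤ (m+1+1)*(a*(s+1+1)*(s+1)) := by
    have h2 : 1+(m+1+1)*(s+1) ≤ (m+1+1)*(s+1+1) := by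
      have e : (m+1+1)*(s+1+1) = (m+1+1)*(s+1) + (m+1+1) := by ring
      rw [e, Nat.add_comm 1 ((m+1+1)*(s+1))]
      exact Nat.add_le_add_left (by omega) _
    have h3 : (b*(s+1))*(1+(m+1+1)*(s+1)) ≤ (a*(s+1))*((m+1+1)*(s+1+1)) :=
      Nat.mul_le_mul (Nat.mul_le_mul hb (Nat.le_refl _)) h2
    calc b*(s+1) + (m+1+1)*(b*(s+1)*(s+1)) = (b*(s+1))*(1+(m+1+1)*(s+1)) := by ring
      _ ≤ (a*(s+1))*((m+1+1)*(s+1+1)) := h3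
      _ = (m+1+1)*(a*(s+1+1)*(s+1)) := by ring
  calc a + (m+1)*(a*(s+1+1)) + b*(s+1) + (m+1+1)*(b*(s+1)*(s+1))
      = (a + (m+1)*(a*(s+1+1))) + (b*(s+1) + (m+1+1)*(b*(s+1)*(s+1))) := by ring
    _ ≤ (m+1+1)*(a*(s+1+1)) + (m+1+1)*(a*(s+1+1)*(s+1)) := Nat.add_le_add k1 k2
    _ = (m+1+1)*(a*(s+1+1)*(s+1+1)) := by ring

set_option maxHeartbeats 1600000 in
/-- If the nonnegative families `O(t,i)` and `D(t,i)` (for `t ≥ 1`, `1 ≤ i ≤ H-1`) satisfy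
`O(t,i) ≤ t^i (∏_{k=1}^i rw_k) (∏_{k=1}^i rv_k)^{t-1} E^{t i}`,
`D(1,i) ≤ i δ E^{i-1} ∏_{k=1}^i rw_k`,
`D(t,1) ≤ rw_1 δ + rv_1 δ O(t-1,1) + rv_1 E D(t-1,1)` for `t ≥ 2`, and
`D(t,i) ≤ rw_i δ O(t,i-1) + rw_i E D(t,i-1) + rv_i δ O(t-1,i) + rv_i E D(t-1,i)` for
`t ≥ 2`, `2 ≤ i ≤ H-1`, then
`D(t,i) ≤ t^{i+1} i δ (∏_{k=1}^i rw_k) (∏_{k=1}^i rv_k)^{t-1} E^{(i+1)t-2}` for all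
`t ≥ 1`, `1 ≤ i ≤ H-1`. -/
theorem recurrence_diff_bound
    (H : ℕ) (hH : 2 ≤ H) (E : ℝ) (hE : 1 ≤ E) (δ : ℝ) (hδ : 0 ≤ δ)
    (rw rv : ℕ → ℝ)
    (hrw : ∀ k, 1 ≤ k → k ≤ H - 1 → 1 ≤ rw k)
    (hrv : ∀ k, 1 ≤ k → k ≤ H - 1 → 1 ≤ rv k)
    (O D : ℕ → ℕ → ℝ)
    (hO : ∀ t i, 1 ≤ t → 1 ≤ i → i ≤ H - 1 → 0 ≤ O t i)
    (hD : ∀ t i, 1 ≤ t → 1 ≤ i → i ≤ H - 1 → 0 ≤ D t i)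
    (hObd : ∀ t i, 1 ≤ t → 1 ≤ i → i ≤ H - 1 →
      O t i ≤ (t : ℝ) ^ i * (∏ k ∈ Finset.Icc 1 i, rw k)
        * (∏ k ∈ Finset.Icc 1 i, rv k) ^ (t - 1) * E ^ (t * i))
    (h1 : ∀ i, 1 ≤ i → i ≤ H - 1 →
      D 1 i ≤ (i : ℝ) * δ * E ^ (i - 1) * ∏ k ∈ Finset.Icc 1 i, rw k)
    (h2 : ∀ t, 2 ≤ t →
      D t 1 ≤ rw 1 * δ + rv 1 * δ * O (t - 1) 1 + rv 1 * E * D (t - 1) 1)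
    (h3 : ∀ t i, 2 ≤ t → 2 ≤ i → i ≤ H - 1 →
      D t i ≤ rw i * δ * O t (i - 1) + rw i * E * D t (i - 1)
        + rv i * δ * O (t - 1) i + rv i * E * D (t - 1) i) :
    ∀ t i, 1 ≤ t → 1 ≤ i → i ≤ H - 1 →
      D t i ≤ (t : ℝ) ^ (i + 1) * (i : ℝ) * δ * (∏ k ∈ Finset.Icc 1 i, rw k)
        * (∏ k ∈ Finset.Icc 1 i, rv k) ^ (t - 1) * E ^ ((i + 1) * t - 2) := by
  have hE0 : (0:ℝ) ≤ E := le_trans zero_le_one hE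
  have hprodW : ∀ j, j ≤ H-1 → (1:ℝ) ≤ ∏ k ∈ Finset.Icc 1 j, rw k := by
    intro j hj
    calc (1:ℝ) = ∏ k ∈ Finset.Icc 1 j, 1 := by simp
      _ ≤ ∏ k ∈ Finset.Icc 1 j, rw k := by
        refine Finset.prod_le_prod (fun k _ => zero_le_one) (fun k hk => ?_)
        rw [Finset.mem_Icc] at hk
        exact hrw k hk.1 (hk.2.trans hj)
  have hprodV : ∀ j, j ≤ H-1 → (1:ℝ) ≤ ∏ k ∈ Finset.Icc 1 j, rv k := by
    intro j hj
    calc (1:ℝ) = ∏ k ∈ Finset.Icc 1 j, 1 := by simp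
      _ ≤ ∏ k ∈ Finset.Icc 1 j, rv k := by
        refine Finset.prod_le_prod (fun k _ => zero_le_one) (fun k hk => ?_)
        rw [Finset.mem_Icc] at hk
        exact hrv k hk.1 (hk.2.trans hj)
  intro t i ht
  revert i
  induction t, ht using Nat.le_induction with
  | base =>
    intro i hi1 hi2
    obtain ⟨m, rfl⟩ : ∃ m, i = m+1 := ⟨i-1, by omega⟩
    have h := h1 (m+1) (by omega) hi2
    simp only [Nat.add_sub_cancel] at h
    rw [show (m+1+1)*1-2 = m from nat_sub_two (by ring)]
    simp only [Nat.sub_self, pow_zero, mul_one, Nat.cast_one, one_pow, one_mul]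
    push_cast at h ⊢
    linarith
  | succ t ht IH =>
    obtain ⟨s, rfl⟩ : ∃ s, t = s+1 := ⟨t-1, by omega⟩
    intro i hi1
    induction i, hi1 using Nat.le_induction with
    | base =>
      intro hi2
      have hrw1 : 1 ≤ rw 1 := hrw 1 le_rfl (by omega)
      have hrv1 : 1 ≤ rv 1 := hrv 1 le_rfl (by omega)
      have hrw10 : (0:ℝ) ≤ rw 1 := by linarith
      have hrv10 : (0:ℝ) ≤ rv 1 := by linarith
      have h2' := h2 (s+1+1) (by omega)
      have hOb := hObd (s+1) 1 (by omega) (by omega) (by omega)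
      have hDb := IH 1 (by omega) (by omega)
      simp only [Nat.add_sub_cancel, Finset.Icc_self, Finset.prod_singleton, pow_one,
        Nat.mul_one, Nat.one_mul, Nat.cast_one, mul_one, one_mul] at h2' hOb hDb ⊢
      rw [show (1+1)*(s+1)-2 = 2*s from nat_sub_two (by ring)] at hDb
      rw [show (1+1)*(s+1+1)-2 = 2*s+2 from nat_sub_two (by ring)]
      push_cast at hOb hDb ⊢
      have hC0 : (0:ℝ) ≤ δ * rw 1 * rv 1^(s+1) * E^(2*s+2) :=
        mul_nonneg (mul_nonneg (mul_nonneg hδ hrw10) (pow_nonneg hrv10 _)) (pow_nonneg hE0 _)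
      have T1 : rw 1 * δ ≤ 1 * (δ * rw 1 * rv 1^(s+1) * E^(2*s+2)) := by
        calc rw 1 * δ = 1 * (δ * rw 1 * 1 * 1) := by ring
          _ ≤ 1 * (δ * rw 1 * rv 1^(s+1) * E^(2*s+2)) :=
            aux_mono zero_le_one hδ hrw10 zero_le_one (one_le_pow₀ hrv1)
              zero_le_one (one_le_pow₀ hE)
      have T2 : rv 1 * δ * O (s+1) 1 ≤ ((s:ℝ)+1) * (δ * rw 1 * rv 1^(s+1) * E^(2*s+2)) := by
        calc rv 1 * δ * O (s+1) 1
            ≤ rv 1 * δ * (((s:ℝ)+1) * rw 1 * rv 1^s * E^(s+1)) :=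
              mul_le_mul_of_nonneg_left hOb (mul_nonneg hrv10 hδ)
          _ = ((s:ℝ)+1) * (δ * rw 1 * (rv 1^s * rv 1) * E^(s+1)) := by ring
          _ ≤ ((s:ℝ)+1) * (δ * rw 1 * rv 1^(s+1) * E^(2*s+2)) :=
              aux_mono (by positivity) hδ hrw10
                (mul_nonneg (pow_nonneg hrv10 s) hrv10) (pow_succ (rv 1) s).symm.le
                (pow_nonneg hE0 _) (pow_le_pow_right₀ hE (by omega))
      have T3 : rv 1 * E * D (s+1) 1
          ≤ ((s:ℝ)+1)^(1+1) * (δ * rw 1 * rv 1^(s+1) * E^(2*s+2)) := by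
        calc rv 1 * E * D (s+1) 1
            ≤ rv 1 * E * (((s:ℝ)+1)^(1+1) * δ * rw 1 * rv 1^s * E^(2*s)) :=
              mul_le_mul_of_nonneg_left hDb (mul_nonneg hrv10 hE0)
          _ = ((s:ℝ)+1)^(1+1) * (δ * rw 1 * (rv 1^s * rv 1) * E^(2*s+1)) := by ring
          _ ≤ ((s:ℝ)+1)^(1+1) * (δ * rw 1 * rv 1^(s+1) * E^(2*s+2)) :=
              aux_mono (by positivity) hδ hrw10
                (mul_nonneg (pow_nonneg hrv10 s) hrv10) (pow_succ (rv 1) s).symm.le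
                (pow_nonneg hE0 _) (pow_le_pow_right₀ hE (by omega))
      have final : D (s+1+1) 1 ≤ ((s:ℝ)+1+1)^(1+1) * (δ * rw 1 * rv 1^(s+1) * E^(2*s+2)) := by
        calc D (s+1+1) 1 ≤ rw 1 * δ + rv 1 * δ * O (s+1) 1 + rv 1 * E * D (s+1) 1 := h2'
          _ ≤ 1 * (δ * rw 1 * rv 1^(s+1) * E^(2*s+2))
              + ((s:ℝ)+1) * (δ * rw 1 * rv 1^(s+1) * E^(2*s+2))
              + ((s:ℝ)+1)^(1+1) * (δ * rw 1 * rv 1^(s+1) * E^(2*s+2)) :=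
            add_le_add (add_le_add T1 T2) T3
          _ = (1 + ((s:ℝ)+1) + ((s:ℝ)+1)^(1+1)) * (δ * rw 1 * rv 1^(s+1) * E^(2*s+2)) := by
            ring
          _ ≤ ((s:ℝ)+1+1)^(1+1) * (δ * rw 1 * rv 1^(s+1) * E^(2*s+2)) := by
            apply mul_le_mul_of_nonneg_right _ hC0
            have he : ((s:ℝ)+1+1)^(1+1)
                = 1 + ((s:ℝ)+1) + ((s:ℝ)+1)^(1+1) + ((s:ℝ)+1) := by ring
            have hs : (0:ℝ) ≤ (s:ℝ) := Nat.cast_nonneg s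
            rw [he]
            linarith
      exact final.trans_eq (by ring)
    | succ i hi ihi =>
      intro hi2
      obtain ⟨m, rfl⟩ : ∃ m, i = m+1 := ⟨i-1, by omega⟩
      have hle2 : m+1 ≤ H-1 := by omega
      have hrw2 : 1 ≤ rw (m+1+1) := hrw _ (by omega) hi2
      have hrv2 : 1 ≤ rv (m+1+1) := hrv _ (by omega) hi2
      have hrw0 : (0:ℝ) ≤ rw (m+1+1) := by linarith
      have hrv0 : (0:ℝ) ≤ rv (m+1+1) := by linarith
      have hP1 : (1:ℝ) ≤ ∏ k ∈ Finset.Icc 1 (m+1), rw k := hprodW _ hle2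
      have hQ1 : (1:ℝ) ≤ ∏ k ∈ Finset.Icc 1 (m+1), rv k := hprodV _ hle2
      have hP0 : (0:ℝ) ≤ ∏ k ∈ Finset.Icc 1 (m+1), rw k := by linarith
      have hQ0 : (0:ℝ) ≤ ∏ k ∈ Finset.Icc 1 (m+1), rv k := by linarith
      have hA := hObd (s+1+1) (m+1) (by omega) (by omega) hle2
      have hB := ihi hle2
      have hC := hObd (s+1) (m+1+1) (by omega) (by omega) hi2
      have hF := IH (m+1+1) (by omega) hi2
      have h3' := h3 (s+1+1) (m+1+1) (by omega) (by omega) hi2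
      simp only [Nat.add_sub_cancel] at hA hB hC hF h3' ⊢
      rw [Finset.prod_Icc_succ_top (show 1 ≤ m+1+1 by omega) rw,
        Finset.prod_Icc_succ_top (show 1 ≤ m+1+1 by omega) rv] at hC hF ⊢
      rw [show (m+1+1+1)*(s+1+1)-2 = m*s+2*m+3*s+4 from nat_sub_two (by ring)]
      rw [show (m+1+1)*(s+1+1)-2 = m*s+2*m+2*s+2 from nat_sub_two (by ring)] at hB
      rw [show (m+1+1+1)*(s+1)-2 = m*s+m+3*s+1 from nat_sub_two (by ring)] at hF
      push_cast at hA hB hC hF ⊢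
      set P := ∏ k ∈ Finset.Icc 1 (m+1), rw k with hPdef
      set Q := ∏ k ∈ Finset.Icc 1 (m+1), rv k with hQdef
      have hPW0 : (0:ℝ) ≤ P * rw (m+1+1) := mul_nonneg hP0 hrw0
      have hQV0 : (0:ℝ) ≤ Q * rv (m+1+1) := mul_nonneg hQ0 hrv0
      have hQle : Q^(s+1) ≤ (Q * rv (m+1+1))^(s+1) :=
        pow_le_pow_left₀ hQ0 (le_mul_of_one_le_right hQ0 hrv2) _
      have hRle : (Q * rv (m+1+1))^s * rv (m+1+1) ≤ (Q * rv (m+1+1))^(s+1) := by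
        rw [pow_succ]
        exact mul_le_mul_of_nonneg_left (le_mul_of_one_le_left hrv0 hQ1) (pow_nonneg hQV0 s)
      have hC0 : (0:ℝ) ≤ δ * (P * rw (m+1+1)) * (Q * rv (m+1+1))^(s+1) * E^(m*s+2*m+3*s+4) :=
        mul_nonneg (mul_nonneg (mul_nonneg hδ hPW0) (pow_nonneg hQV0 _)) (pow_nonneg hE0 _)
      have T1 : rw (m+1+1) * δ * O (s+1+1) (m+1)
          ≤ ((s:ℝ)+1+1)^(m+1)
            * (δ * (P * rw (m+1+1)) * (Q * rv (m+1+1))^(s+1) * E^(m*s+2*m+3*s+4)) := by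
        calc rw (m+1+1) * δ * O (s+1+1) (m+1)
            ≤ rw (m+1+1) * δ * (((s:ℝ)+1+1)^(m+1) * P * Q^(s+1) * E^((s+1+1)*(m+1))) :=
              mul_le_mul_of_nonneg_left hA (mul_nonneg hrw0 hδ)
          _ = ((s:ℝ)+1+1)^(m+1)
              * (δ * (P * rw (m+1+1)) * Q^(s+1) * E^((s+1+1)*(m+1))) := by ring
          _ ≤ _ := aux_mono (by positivity) hδ hPW0 (pow_nonneg hQ0 _) hQle
              (pow_nonneg hE0 _) (pow_le_pow_right₀ hE (by
                calc (s+1+1)*(m+1) = m*s+(2*m+s+2) := by ring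
                  _ ≤ m*s+(2*m+3*s+4) := Nat.add_le_add_left (by omega) _
                  _ = m*s+2*m+3*s+4 := by ring))
      have T2 : rw (m+1+1) * E * D (s+1+1) (m+1)
          ≤ (((s:ℝ)+1+1)^(m+1+1) * ((m:ℝ)+1))
            * (δ * (P * rw (m+1+1)) * (Q * rv (m+1+1))^(s+1) * E^(m*s+2*m+3*s+4)) := by
        calc rw (m+1+1) * E * D (s+1+1) (m+1)
            ≤ rw (m+1+1) * E * (((s:ℝ)+1+1)^(m+1+1) * ((m:ℝ)+1) * δ * P * Q^(s+1)
                * E^(m*s+2*m+2*s+2)) :=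
              mul_le_mul_of_nonneg_left hB (mul_nonneg hrw0 hE0)
          _ = (((s:ℝ)+1+1)^(m+1+1) * ((m:ℝ)+1))
              * (δ * (P * rw (m+1+1)) * Q^(s+1) * E^(m*s+2*m+2*s+3)) := by ring
          _ ≤ _ := aux_mono (by positivity) hδ hPW0 (pow_nonneg hQ0 _) hQle
              (pow_nonneg hE0 _) (pow_le_pow_right₀ hE (by
                calc m*s+2*m+2*s+3 = m*s+(2*m+2*s+3) := by ring
                  _ ≤ m*s+(2*m+3*s+4) := Nat.add_le_add_left (by omega) _
                  _ = m*s+2*m+3*s+4 := by ring))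
      have T3 : rv (m+1+1) * δ * O (s+1) (m+1+1)
          ≤ ((s:ℝ)+1)^(m+1+1)
            * (δ * (P * rw (m+1+1)) * (Q * rv (m+1+1))^(s+1) * E^(m*s+2*m+3*s+4)) := by
        calc rv (m+1+1) * δ * O (s+1) (m+1+1)
            ≤ rv (m+1+1) * δ * (((s:ℝ)+1)^(m+1+1) * (P * rw (m+1+1))
                * (Q * rv (m+1+1))^s * E^((s+1)*(m+1+1))) :=
              mul_le_mul_of_nonneg_left hC (mul_nonneg hrv0 hδ)
          _ = ((s:ℝ)+1)^(m+1+1) * (δ * (P * rw (m+1+1))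
              * ((Q * rv (m+1+1))^s * rv (m+1+1)) * E^((s+1)*(m+1+1))) := by ring
          _ ≤ _ := aux_mono (by positivity) hδ hPW0
              (mul_nonneg (pow_nonneg hQV0 s) hrv0) hRle
              (pow_nonneg hE0 _) (pow_le_pow_right₀ hE (by
                calc (s+1)*(m+1+1) = m*s+(m+2*s+2) := by ring
                  _ ≤ m*s+(2*m+3*s+4) := Nat.add_le_add_left (by omega) _
                  _ = m*s+2*m+3*s+4 := by ring))
      have T4 : rv (m+1+1) * E * D (s+1) (m+1+1)
          ≤ (((s:ℝ)+1)^(m+1+1+1) * ((m:ℝ)+1+1))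
            * (δ * (P * rw (m+1+1)) * (Q * rv (m+1+1))^(s+1) * E^(m*s+2*m+3*s+4)) := by
        calc rv (m+1+1) * E * D (s+1) (m+1+1)
            ≤ rv (m+1+1) * E * (((s:ℝ)+1)^(m+1+1+1) * ((m:ℝ)+1+1) * δ * (P * rw (m+1+1))
                * (Q * rv (m+1+1))^s * E^(m*s+m+3*s+1)) :=
              mul_le_mul_of_nonneg_left hF (mul_nonneg hrv0 hE0)
          _ = (((s:ℝ)+1)^(m+1+1+1) * ((m:ℝ)+1+1))
              * (δ * (P * rw (m+1+1)) * ((Q * rv (m+1+1))^s * rv (m+1+1))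
                * E^(m*s+m+3*s+2)) := by ring
          _ ≤ _ := aux_mono (by positivity) hδ hPW0
              (mul_nonneg (pow_nonneg hQV0 s) hrv0) hRle
              (pow_nonneg hE0 _) (pow_le_pow_right₀ hE (by
                calc m*s+m+3*s+2 = m*s+(m+3*s+2) := by ring
                  _ ≤ m*s+(2*m+3*s+4) := Nat.add_le_add_left (by omega) _
                  _ = m*s+2*m+3*s+4 := by ring))
      have final : D (s+1+1) (m+1+1)
          ≤ (((m:ℝ)+1+1) * ((s:ℝ)+1+1)^(m+1+1+1))
            * (δ * (P * rw (m+1+1)) * (Q * rv (m+1+1))^(s+1) * E^(m*s+2*m+3*s+4)) := by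
        calc D (s+1+1) (m+1+1)
            ≤ rw (m+1+1) * δ * O (s+1+1) (m+1) + rw (m+1+1) * E * D (s+1+1) (m+1)
              + rv (m+1+1) * δ * O (s+1) (m+1+1) + rv (m+1+1) * E * D (s+1) (m+1+1) := h3'
          _ ≤ ((s:ℝ)+1+1)^(m+1)
                * (δ * (P * rw (m+1+1)) * (Q * rv (m+1+1))^(s+1) * E^(m*s+2*m+3*s+4))
              + (((s:ℝ)+1+1)^(m+1+1) * ((m:ℝ)+1))
                * (δ * (P * rw (m+1+1)) * (Q * rv (m+1+1))^(s+1) * E^(m*s+2*m+3*s+4))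
              + ((s:ℝ)+1)^(m+1+1)
                * (δ * (P * rw (m+1+1)) * (Q * rv (m+1+1))^(s+1) * E^(m*s+2*m+3*s+4))
              + (((s:ℝ)+1)^(m+1+1+1) * ((m:ℝ)+1+1))
                * (δ * (P * rw (m+1+1)) * (Q * rv (m+1+1))^(s+1) * E^(m*s+2*m+3*s+4)) :=
            add_le_add (add_le_add (add_le_add T1 T2) T3) T4
          _ = (((s:ℝ)+1+1)^(m+1) + ((m:ℝ)+1)*((s:ℝ)+1+1)^(m+1+1) + ((s:ℝ)+1)^(m+1+1)
                + ((m:ℝ)+1+1)*((s:ℝ)+1)^(m+1+1+1))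
              * (δ * (P * rw (m+1+1)) * (Q * rv (m+1+1))^(s+1) * E^(m*s+2*m+3*s+4)) := by
            ring
          _ ≤ _ := by
            apply mul_le_mul_of_nonneg_right _ hC0
            exact_mod_cast coeffB m s
      exact final.trans_eq (by ring)
end

section
/- Let H ≥ 2 be an integer, E ≥ 1 and δ ≥ 0 real numbers, p ≥ 1 and L_1, …, L_{H−1} ≥ 1 real numbers, and rw_1, …, rw_{H−1}, rv_1, …, rv_{H−1} real numbers each ≥ 1. Suppose O(t,i) ≥ 0 and D(t,i) ≥ 0 are defined for all integers t ≥ 1 and 1 ≤ i ≤ H−1 and satisfy: O(t,i) ≤ t^i · (Π_{k=1}^{i} rw_k) · (Π_{k=1}^{i} rv_k)^{t−1} · E^{t·i} for all t, i; D(1,i) ≤ δ·(p·L_1 + Σ_{k=1}^{i} L_k)·Π_{k=1}^{i}(δ·L_k + rw_k·E) for all i; D(t,1) ≤ δ·L_1·p + (δ·L_1 + rv_1·E)·D(t−1,1) + δ·L_1·O(t−1,1) for all t ≥ 2; and D(t,i) ≤ (δ·L_i + rw_i·E)·D(t,i−1) + δ·L_i·O(t,i−1) + (δ·L_i + rv_i·E)·D(t−1,i)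 + δ·L_i·O(t−1,i) for all t ≥ 2 and 2 ≤ i ≤ H−1. Then D(t,i) ≤ t^{i+1} · δ · (p·L_1 + Σ_{k=1}^{i} L_k) · (Π_{k=1}^{i}(δ·L_k + rw_k·E)) · (Π_{k=1}^{i}(δ·L_k + rv_k·E))^{t−1} for all t ≥ 1 and 1 ≤ i ≤ H−1. -/
open Finset
set_option maxHeartbeats 1000000

lemma pow_sum_le_aux (s j : ℕ) :
    (s+2)^(j+2) + (s+2)^(j+1) + (s+1)^(j+3) + (s+1)^(j+2) ≤ (s+2)^(j+3) := by
  induction j with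
  | zero =>
    have h : (s:ℤ) ≥ 0 := Int.ofNat_nonneg s
    zify
    norm_num
    nlinarith [sq_nonneg (s:ℤ), h]
  | succ j ih =>
    have h1 : (s+1)^(j+4) + (s+1)^(j+3) ≤ (s+2) * ((s+1)^(j+3) + (s+1)^(j+2)) := by
      have e1 : (s+1)^(j+4) + (s+1)^(j+3) = (s+1)^(j+2) * ((s+1)^2 + (s+1)) := by ring
      have e2 : (s+2) * ((s+1)^(j+3) + (s+1)^(j+2)) = (s+1)^(j+2) * ((s+2)*(s+1) + (s+2)) := by ring
      rw [e1, e2]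
      apply Nat.mul_le_mul_left
      nlinarith
    have h2 : (s+2)^(j+3) + (s+2)^(j+2) + (s+1)^(j+4) + (s+1)^(j+3)
        ≤ (s+2) * ((s+2)^(j+2) + (s+2)^(j+1) + (s+1)^(j+3) + (s+1)^(j+2)) := by
      have e3 : (s+2) * ((s+2)^(j+2) + (s+2)^(j+1) + (s+1)^(j+3) + (s+1)^(j+2))
          = (s+2)^(j+3) + (s+2)^(j+2) + (s+2) * ((s+1)^(j+3) + (s+1)^(j+2)) := by ring
      omega
    calc (s+2)^(j+3) + (s+2)^(j+2) + (s+1)^(j+4) + (s+1)^(j+3)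
        ≤ (s+2) * ((s+2)^(j+2) + (s+2)^(j+1) + (s+1)^(j+3) + (s+1)^(j+2)) := h2
      _ ≤ (s+2) * (s+2)^(j+3) := Nat.mul_le_mul_left _ ih
      _ = (s+2)^(j+4) := by ring

lemma pow_sum_le_aux_real (s j : ℕ) :
    ((s:ℝ)+2)^(j+2) + ((s:ℝ)+2)^(j+1) + ((s:ℝ)+1)^(j+3) + ((s:ℝ)+1)^(j+2) ≤ ((s:ℝ)+2)^(j+3) := by
  have := pow_sum_le_aux s j
  exact_mod_cast (Nat.cast_le (α := ℝ)).mpr this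


lemma succ_step (s i : ℕ) (hi : 1 ≤ i)
    (δ E L' Fw Fv S S' W W' V V' RW RV RW' RV' Dn Da Db Oa Ob : ℝ)
    (hδ : 0 ≤ δ) (hE : 1 ≤ E) (hL' : 1 ≤ L')
    (hFw : 1 ≤ Fw) (hFv : 1 ≤ Fv) (hW : 1 ≤ W) (hV : 1 ≤ V)
    (hW'1 : 1 ≤ W') (hV'1 : 1 ≤ V')
    (hS : 0 ≤ S) (hS'le : S ≤ S') (hLS' : L' ≤ S') (hS'0 : 0 ≤ S')
    (hWle : W ≤ W') (hVle : V ≤ V') (hFvle : Fv ≤ V')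
    (hRW : 0 ≤ RW) (hRV : 0 ≤ RV) (hRW' : 0 ≤ RW') (hRV' : 0 ≤ RV')
    (habsW : RW * E^i ≤ W) (habsV : RV * E^i ≤ V)
    (habsW' : RW' * E^(i+1) ≤ W') (habsV' : RV' * E^(i+1) ≤ V')
    (hW'eq : W' = W * Fw)
    (hA : Dn ≤ Fw * Da + δ * L' * Oa + Fv * Db + δ * L' * Ob)
    (hDa : Da ≤ ((s:ℝ)+2)^(i+1) * δ * S * W * V^(s+1))
    (hDb : Db ≤ ((s:ℝ)+1)^(i+2) * δ * S' * W' * V'^s)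
    (hOa : Oa ≤ ((s:ℝ)+2)^i * RW * RV^(s+1) * E^((s+2)*i))
    (hOb : Ob ≤ ((s:ℝ)+1)^(i+1) * RW' * RV'^s * E^((s+1)*(i+1))) :
    Dn ≤ ((s:ℝ)+2)^(i+2) * δ * S' * W' * V'^(s+1) := by
  obtain ⟨j, rfl⟩ : ∃ j, i = j + 1 := ⟨i - 1, by omega⟩
  have hE0 : (0:ℝ) ≤ E := by linarith
  have hW0 : (0:ℝ) ≤ W := by linarith
  have hV0 : (0:ℝ) ≤ V := by linarith
  have hW'0 : (0:ℝ) ≤ W' := by linarith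
  have hV'0 : (0:ℝ) ≤ V' := by linarith
  have hFw0 : (0:ℝ) ≤ Fw := by linarith
  have hFv0 : (0:ℝ) ≤ Fv := by linarith
  have hδS' : (0:ℝ) ≤ δ * S' := mul_nonneg hδ hS'0
  have hδL' : (0:ℝ) ≤ δ * L' := mul_nonneg hδ (by linarith)
  have hδSW : (0:ℝ) ≤ δ * S' * W' := mul_nonneg hδS' hW'0
  have hC0 : (0:ℝ) ≤ δ * S' * W' * V'^(s+1) :=
    mul_nonneg hδSW (pow_nonneg hV'0 _)
  have hWFw0 : (0:ℝ) ≤ W * Fw := mul_nonneg hW0 hFw0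
  set i := j + 1 with hidef
  have T1 : Fw * Da ≤ ((s:ℝ)+2)^(i+1) * (δ * S' * W' * V'^(s+1)) := by
    calc Fw * Da ≤ Fw * (((s:ℝ)+2)^(i+1) * δ * S * W * V^(s+1)) :=
          mul_le_mul_of_nonneg_left hDa hFw0
      _ = ((s:ℝ)+2)^(i+1) * (δ * S * (W*Fw) * V^(s+1)) := by ring
      _ ≤ ((s:ℝ)+2)^(i+1) * (δ * S' * W' * V'^(s+1)) := by
          apply mul_le_mul_of_nonneg_left _ (by positivity)
          rw [hW'eq]
          gcongr <;> first | assumption | linarith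
  have eE : E^((s+2)*i) = E^i * (E^i)^(s+1) := by
    rw [← pow_mul, ← pow_add]
    congr 1
    ring
  have T2 : δ * L' * Oa ≤ ((s:ℝ)+2)^i * (δ * S' * W' * V'^(s+1)) := by
    have g1 : RW * E^i ≤ W' := le_trans habsW hWle
    have g2 : RV * E^i ≤ V' := le_trans habsV hVle
    have g3 : (0:ℝ) ≤ RV * E^i := mul_nonneg hRV (pow_nonneg hE0 _)
    have g3' : (0:ℝ) ≤ RW * E^i := mul_nonneg hRW (pow_nonneg hE0 _)
    calc δ * L' * Oa ≤ δ * L' * (((s:ℝ)+2)^i * RW * RV^(s+1) * E^((s+2)*i)) :=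
          mul_le_mul_of_nonneg_left hOa hδL'
      _ = ((s:ℝ)+2)^i * ((δ*L') * (RW*E^i) * ((RV*E^i)^(s+1))) := by
          rw [eE, mul_pow]; ring
      _ ≤ ((s:ℝ)+2)^i * ((δ*S') * W' * V'^(s+1)) := by
          apply mul_le_mul_of_nonneg_left _ (by positivity)
          gcongr <;> first | assumption | linarith
      _ = ((s:ℝ)+2)^i * (δ * S' * W' * V'^(s+1)) := by ring
  have T3 : Fv * Db ≤ ((s:ℝ)+1)^(i+2) * (δ * S' * W' * V'^(s+1)) := by
    calc Fv * Db ≤ Fv * (((s:ℝ)+1)^(i+2) * δ * S' * W' * V'^s) :=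
          mul_le_mul_of_nonneg_left hDb hFv0
      _ = ((s:ℝ)+1)^(i+2) * ((δ*S'*W') * (V'^s * Fv)) := by ring
      _ ≤ ((s:ℝ)+1)^(i+2) * ((δ*S'*W') * (V'^s * V')) := by
          apply mul_le_mul_of_nonneg_left _ (by positivity)
          apply mul_le_mul_of_nonneg_left _ hδSW
          exact mul_le_mul_of_nonneg_left hFvle (pow_nonneg hV'0 s)
      _ = ((s:ℝ)+1)^(i+2) * (δ * S' * W' * V'^(s+1)) := by ring
  have eE' : E^((s+1)*(i+1)) = E^(i+1) * (E^(i+1))^s := by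
    rw [← pow_mul, ← pow_add]
    congr 1
    ring
  have T4 : δ * L' * Ob ≤ ((s:ℝ)+1)^(i+1) * (δ * S' * W' * V'^(s+1)) := by
    have g3 : (0:ℝ) ≤ RV' * E^(i+1) := mul_nonneg hRV' (pow_nonneg hE0 _)
    have g3' : (0:ℝ) ≤ RW' * E^(i+1) := mul_nonneg hRW' (pow_nonneg hE0 _)
    calc δ * L' * Ob ≤ δ * L' * (((s:ℝ)+1)^(i+1) * RW' * RV'^s * E^((s+1)*(i+1))) :=
          mul_le_mul_of_nonneg_left hOb hδL'
      _ = ((s:ℝ)+1)^(i+1) * ((δ*L') * (RW'*E^(i+1)) * ((RV'*E^(i+1))^s)) := by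
          rw [eE', mul_pow]; ring
      _ ≤ ((s:ℝ)+1)^(i+1) * ((δ*S') * W' * V'^s) := by
          apply mul_le_mul_of_nonneg_left _ (by positivity)
          gcongr <;> first | assumption | linarith
      _ ≤ ((s:ℝ)+1)^(i+1) * ((δ*S') * W' * (V'^s * V')) := by
          apply mul_le_mul_of_nonneg_left _ (by positivity)
          apply mul_le_mul_of_nonneg_left _ hδSW
          exact le_mul_of_one_le_right (pow_nonneg hV'0 s) hV'1
      _ = ((s:ℝ)+1)^(i+1) * (δ * S' * W' * V'^(s+1)) := by ring
  have hsum : ((s:ℝ)+2)^(i+1) + ((s:ℝ)+2)^i + ((s:ℝ)+1)^(i+2) + ((s:ℝ)+1)^(i+1)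
      ≤ ((s:ℝ)+2)^(i+2) := pow_sum_le_aux_real s j
  calc Dn ≤ Fw * Da + δ * L' * Oa + Fv * Db + δ * L' * Ob := hA
    _ ≤ (((s:ℝ)+2)^(i+1) + ((s:ℝ)+2)^i + ((s:ℝ)+1)^(i+2) + ((s:ℝ)+1)^(i+1))
        * (δ * S' * W' * V'^(s+1)) := by linarith
    _ ≤ ((s:ℝ)+2)^(i+2) * (δ * S' * W' * V'^(s+1)) :=
        mul_le_mul_of_nonneg_right hsum hC0
    _ = ((s:ℝ)+2)^(i+2) * δ * S' * W' * V'^(s+1) := by ring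

/-- If the nonnegative families `O(t,i)` and `D(t,i)` (for `t ≥ 1`, `1 ≤ i ≤ H-1`) satisfy
`O(t,i) ≤ t^i (∏_{k=1}^i rw_k) (∏_{k=1}^i rv_k)^{t-1} E^{t i}`,
`D(1,i) ≤ δ (p L₁ + Σ_{k=1}^i L_k) ∏_{k=1}^i (δ L_k + rw_k E)`,
`D(t,1) ≤ δ L₁ p + (δ L₁ + rv_1 E) D(t-1,1) + δ L₁ O(t-1,1)` for `t ≥ 2`, and
`D(t,i) ≤ (δ L_i + rw_i E) D(t,i-1) + δ L_i O(t,i-1) + (δ L_i + rv_i E) D(t-1,i)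
  + δ L_i O(t-1,i)` for `t ≥ 2`, `2 ≤ i ≤ H-1`, then
`D(t,i) ≤ t^{i+1} δ (p L₁ + Σ_{k=1}^i L_k) (∏_{k=1}^i (δ L_k + rw_k E))
  (∏_{k=1}^i (δ L_k + rv_k E))^{t-1}` for all `t ≥ 1`, `1 ≤ i ≤ H-1`. -/
theorem recurrence_diff_bound_dense
    (H : ℕ) (hH : 2 ≤ H) (E : ℝ) (hE : 1 ≤ E) (δ : ℝ) (hδ : 0 ≤ δ)
    (p : ℝ) (hp : 1 ≤ p)
    (L : ℕ → ℝ) (hL : ∀ k, 1 ≤ k → k ≤ H - 1 → 1 ≤ L k)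
    (rw rv : ℕ → ℝ)
    (hrw : ∀ k, 1 ≤ k → k ≤ H - 1 → 1 ≤ rw k)
    (hrv : ∀ k, 1 ≤ k → k ≤ H - 1 → 1 ≤ rv k)
    (O D : ℕ → ℕ → ℝ)
    (hO : ∀ t i, 1 ≤ t → 1 ≤ i → i ≤ H - 1 → 0 ≤ O t i)
    (hD : ∀ t i, 1 ≤ t → 1 ≤ i → i ≤ H - 1 → 0 ≤ D t i)
    (hObd : ∀ t i, 1 ≤ t → 1 ≤ i → i ≤ H - 1 →
      O t i ≤ (t : ℝ) ^ i * (∏ k ∈ Finset.Icc 1 i, rw k)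
        * (∏ k ∈ Finset.Icc 1 i, rv k) ^ (t - 1) * E ^ (t * i))
    (h1 : ∀ i, 1 ≤ i → i ≤ H - 1 →
      D 1 i ≤ δ * (p * L 1 + ∑ k ∈ Finset.Icc 1 i, L k)
        * ∏ k ∈ Finset.Icc 1 i, (δ * L k + rw k * E))
    (h2 : ∀ t, 2 ≤ t →
      D t 1 ≤ δ * L 1 * p + (δ * L 1 + rv 1 * E) * D (t - 1) 1 + δ * L 1 * O (t - 1) 1)
    (h3 : ∀ t i, 2 ≤ t → 2 ≤ i → i ≤ H - 1 →
      D t i ≤ (δ * L i + rw i * E) * D t (i - 1) + δ * L i * O t (i - 1)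
        + (δ * L i + rv i * E) * D (t - 1) i + δ * L i * O (t - 1) i) :
    ∀ t i, 1 ≤ t → 1 ≤ i → i ≤ H - 1 →
      D t i ≤ (t : ℝ) ^ (i + 1) * δ * (p * L 1 + ∑ k ∈ Finset.Icc 1 i, L k)
        * (∏ k ∈ Finset.Icc 1 i, (δ * L k + rw k * E))
        * (∏ k ∈ Finset.Icc 1 i, (δ * L k + rv k * E)) ^ (t - 1) := by
  have hE0 : (0:ℝ) ≤ E := by linarith
  -- factor bounds
  have hfacW : ∀ k, 1 ≤ k → k ≤ H - 1 → 1 ≤ δ * L k + rw k * E := by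
    intro k hk hk'
    nlinarith [hL k hk hk', hrw k hk hk']
  have hfacV : ∀ k, 1 ≤ k → k ≤ H - 1 → 1 ≤ δ * L k + rv k * E := by
    intro k hk hk'
    nlinarith [hL k hk hk', hrv k hk hk']
  have hWone : ∀ i, i ≤ H - 1 → (1:ℝ) ≤ ∏ k ∈ Icc 1 i, (δ * L k + rw k * E) := by
    intro i hi
    calc (1:ℝ) = ∏ k ∈ Icc 1 i, 1 := by simp
      _ ≤ ∏ k ∈ Icc 1 i, (δ * L k + rw k * E) := by
          apply Finset.prod_le_prod (fun k hk => by norm_num)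
          intro k hk
          rw [Finset.mem_Icc] at hk
          exact hfacW k hk.1 (le_trans hk.2 hi)
  have hVone : ∀ i, i ≤ H - 1 → (1:ℝ) ≤ ∏ k ∈ Icc 1 i, (δ * L k + rv k * E) := by
    intro i hi
    calc (1:ℝ) = ∏ k ∈ Icc 1 i, 1 := by simp
      _ ≤ ∏ k ∈ Icc 1 i, (δ * L k + rv k * E) := by
          apply Finset.prod_le_prod (fun k hk => by norm_num)
          intro k hk
          rw [Finset.mem_Icc] at hk
          exact hfacV k hk.1 (le_trans hk.2 hi)
  -- product absorption: (∏ rw) * E^i ≤ ∏ (δL + rw E)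
  have hRW : ∀ i, i ≤ H - 1 →
      (∏ k ∈ Icc 1 i, rw k) * E ^ i ≤ ∏ k ∈ Icc 1 i, (δ * L k + rw k * E) := by
    intro i hi
    have e1 : (∏ k ∈ Icc 1 i, rw k) * E ^ i = ∏ k ∈ Icc 1 i, (rw k * E) := by
      rw [Finset.prod_mul_distrib, Finset.prod_const, Nat.card_Icc]
      simp
    rw [e1]
    apply Finset.prod_le_prod
    · intro k hk
      rw [Finset.mem_Icc] at hk
      have := hrw k hk.1 (le_trans hk.2 hi)
      positivity
    · intro k hk
      rw [Finset.mem_Icc] at hk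
      have := hL k hk.1 (le_trans hk.2 hi)
      nlinarith
  have hRV : ∀ i, i ≤ H - 1 →
      (∏ k ∈ Icc 1 i, rv k) * E ^ i ≤ ∏ k ∈ Icc 1 i, (δ * L k + rv k * E) := by
    intro i hi
    have e1 : (∏ k ∈ Icc 1 i, rv k) * E ^ i = ∏ k ∈ Icc 1 i, (rv k * E) := by
      rw [Finset.prod_mul_distrib, Finset.prod_const, Nat.card_Icc]
      simp
    rw [e1]
    apply Finset.prod_le_prod
    · intro k hk
      rw [Finset.mem_Icc] at hk
      have := hrv k hk.1 (le_trans hk.2 hi)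
      positivity
    · intro k hk
      rw [Finset.mem_Icc] at hk
      have := hL k hk.1 (le_trans hk.2 hi)
      nlinarith
  have hRWnn : ∀ i, i ≤ H - 1 → (0:ℝ) ≤ ∏ k ∈ Icc 1 i, rw k := by
    intro i hi
    apply Finset.prod_nonneg
    intro k hk
    rw [Finset.mem_Icc] at hk
    linarith [hrw k hk.1 (le_trans hk.2 hi)]
  have hRVnn : ∀ i, i ≤ H - 1 → (0:ℝ) ≤ ∏ k ∈ Icc 1 i, rv k := by
    intro i hi
    apply Finset.prod_nonneg
    intro k hk
    rw [Finset.mem_Icc] at hk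
    linarith [hrv k hk.1 (le_trans hk.2 hi)]
  -- sum facts
  have hSum_nn : ∀ i, i ≤ H - 1 → (0:ℝ) ≤ ∑ k ∈ Icc 1 i, L k := by
    intro i hi
    apply Finset.sum_nonneg
    intro k hk
    rw [Finset.mem_Icc] at hk
    linarith [hL k hk.1 (le_trans hk.2 hi)]
  have hS_one : ∀ i, i ≤ H - 1 → (1:ℝ) ≤ p * L 1 + ∑ k ∈ Icc 1 i, L k := by
    intro i hi
    have h1' : 1 ≤ L 1 := hL 1 le_rfl (by omega)
    nlinarith [hSum_nn i hi]
  suffices key : ∀ t, 1 ≤ t → ∀ i, 1 ≤ i → i ≤ H - 1 →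
      D t i ≤ (t : ℝ) ^ (i + 1) * δ * (p * L 1 + ∑ k ∈ Finset.Icc 1 i, L k)
        * (∏ k ∈ Finset.Icc 1 i, (δ * L k + rw k * E))
        * (∏ k ∈ Finset.Icc 1 i, (δ * L k + rv k * E)) ^ (t - 1) by
    exact fun t i ht hi hiH => key t ht i hi hiH
  intro t ht
  induction t, ht using Nat.le_induction with
  | base =>
    intro i hi hiH
    have := h1 i hi hiH
    simpa using this
  | succ t ht IH =>
    intro i hi
    induction i, hi using Nat.le_induction with
    | base =>
      intro _
      have h1H : 1 ≤ H - 1 := by omega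
      obtain ⟨s, rfl⟩ := Nat.exists_eq_add_of_le ht
      have hL1 : 1 ≤ L 1 := hL 1 le_rfl h1H
      have hw1 : 1 ≤ rw 1 := hrw 1 le_rfl h1H
      have hv1 : 1 ≤ rv 1 := hrv 1 le_rfl h1H
      have hW1 : 1 ≤ δ * L 1 + rw 1 * E := hfacW 1 le_rfl h1H
      have hV1 : 1 ≤ δ * L 1 + rv 1 * E := hfacV 1 le_rfl h1H
      have hA := h2 (1 + s + 1) (by omega)
      have hB := IH 1 le_rfl h1H
      have hC := hObd (1 + s) 1 (by omega) le_rfl h1H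
      simp only [Finset.Icc_self, Finset.prod_singleton, Finset.sum_singleton] at hB hC ⊢
      have e1 : 1 + s + 1 - 1 = 1 + s := by omega
      have e2 : 1 + s - 1 = s := by omega
      have e3 : (1 + s) * 1 = s + 1 := by omega
      rw [e1] at hA
      rw [e2] at hB hC
      rw [e3, pow_one] at hC
      have e4 : 1 + s + 1 - 1 = s + 1 := by omega
      rw [e4]
      set S := p * L 1 + L 1 with hSdef
      set W := δ * L 1 + rw 1 * E with hWdef
      set V := δ * L 1 + rv 1 * E with hVdef
      have hS1 : (1:ℝ) ≤ S := by rw [hSdef]; nlinarith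
      have hδS : 0 ≤ δ * S := by nlinarith
      have hδL : 0 ≤ δ * L 1 := by nlinarith
      have hV0 : (0:ℝ) ≤ V := by linarith
      have hVpow : (1:ℝ) ≤ V ^ (s+1) := one_le_pow₀ hV1
      have hVpow' : (1:ℝ) ≤ V ^ s := one_le_pow₀ hV1
      -- piece 1
      have P1 : δ * L 1 * p ≤ δ * S * W * V ^ (s+1) := by
        have q0 : δ * L 1 * p ≤ δ * S := by rw [hSdef]; nlinarith
        have q1 : δ * S ≤ δ * S * W := le_mul_of_one_le_right hδS hW1
        have q2 : δ * S * W ≤ δ * S * W * V ^ (s+1) :=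
          le_mul_of_one_le_right (mul_nonneg hδS (by linarith)) hVpow
        linarith
      -- piece 2
      have P2 : V * D (1 + s) 1 ≤ ((1:ℝ) + s) ^ 2 * δ * S * W * V ^ (s+1) := by
        have := mul_le_mul_of_nonneg_left hB hV0
        calc V * D (1 + s) 1 ≤ V * ((↑(1 + s):ℝ) ^ (1+1) * δ * S * W * V ^ s) := this
          _ = ((1:ℝ) + s) ^ 2 * δ * S * W * V ^ (s+1) := by push_cast; ring
      -- piece 3
      have P3 : δ * L 1 * O (1 + s) 1 ≤ ((1:ℝ) + s) * δ * S * W * V ^ (s+1) := by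
        have q0 : δ * L 1 * O (1 + s) 1
            ≤ δ * L 1 * ((↑(1 + s):ℝ) * rw 1 * rv 1 ^ s * E ^ (s+1)) :=
          mul_le_mul_of_nonneg_left hC hδL
        have q1 : δ * L 1 * ((↑(1 + s):ℝ) * rw 1 * rv 1 ^ s * E ^ (s+1))
            = ((1:ℝ) + s) * (δ * L 1) * (rw 1 * E) * (rv 1 * E) ^ s := by
          push_cast; rw [mul_pow]; ring
        have q2 : ((1:ℝ) + s) * (δ * L 1) * (rw 1 * E) * (rv 1 * E) ^ s
            ≤ ((1:ℝ) + s) * (δ * S) * W * V ^ s := by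
          gcongr <;> first
            | positivity
            | (simp only [hSdef, hWdef, hVdef]; nlinarith)
        have q3 : ((1:ℝ) + s) * (δ * S) * W * V ^ s ≤ ((1:ℝ) + s) * (δ * S) * W * V ^ (s+1) := by
          have : V ^ s ≤ V ^ (s+1) := pow_le_pow_right₀ hV1 (Nat.le_succ s)
          have hnn : (0:ℝ) ≤ ((1:ℝ) + s) * (δ * S) * W := by positivity
          nlinarith
        calc δ * L 1 * O (1 + s) 1 ≤ δ * L 1 * ((↑(1 + s):ℝ) * rw 1 * rv 1 ^ s * E ^ (s+1)) := q0
          _ = ((1:ℝ) + s) * (δ * L 1) * (rw 1 * E) * (rv 1 * E) ^ s := q1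
          _ ≤ ((1:ℝ) + s) * (δ * S) * W * V ^ s := q2
          _ ≤ ((1:ℝ) + s) * (δ * S) * W * V ^ (s+1) := q3
          _ = ((1:ℝ) + s) * δ * S * W * V ^ (s+1) := by ring
      have hC0 : (0:ℝ) ≤ δ * S * W * V ^ (s+1) := by positivity
      have hsnn : (0:ℝ) ≤ (s:ℝ) := Nat.cast_nonneg s
      calc D (1 + s + 1) 1 ≤ δ * L 1 * p + V * D (1 + s) 1 + δ * L 1 * O (1 + s) 1 := hA
        _ ≤ δ * S * W * V ^ (s+1) + ((1:ℝ) + s) ^ 2 * δ * S * W * V ^ (s+1)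
            + ((1:ℝ) + s) * δ * S * W * V ^ (s+1) := by linarith
        _ ≤ (↑(1 + s + 1):ℝ) ^ (1+1) * δ * S * W * V ^ (s+1) := by
            push_cast
            nlinarith [mul_nonneg hsnn hC0]
    | succ i hi IH2 =>
      intro hiH
      obtain ⟨s, rfl⟩ := Nat.exists_eq_add_of_le ht
      have hiH' : i ≤ H - 1 := by omega
      have hL1 : 1 ≤ L 1 := hL 1 le_rfl (by omega)
      have hpL1 : (0:ℝ) ≤ p * L 1 := by nlinarith
      have eW : ∏ k ∈ Icc 1 (i+1), (δ * L k + rw k * E)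
          = (∏ k ∈ Icc 1 i, (δ * L k + rw k * E)) * (δ * L (i+1) + rw (i+1) * E) :=
        Finset.prod_Icc_succ_top (by omega) _
      have eV : ∏ k ∈ Icc 1 (i+1), (δ * L k + rv k * E)
          = (∏ k ∈ Icc 1 i, (δ * L k + rv k * E)) * (δ * L (i+1) + rv (i+1) * E) :=
        Finset.prod_Icc_succ_top (by omega) _
      have eS : ∑ k ∈ Icc 1 (i+1), L k = (∑ k ∈ Icc 1 i, L k) + L (i+1) :=
        Finset.sum_Icc_succ_top (by omega) _
      -- index normalizations
      have e1 : 1 + s + 1 - 1 = 1 + s := by omega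
      have e2 : i + 1 - 1 = i := by omega
      have e3 : 1 + s + 1 - 1 = s + 1 := by omega
      have e4 : 1 + s - 1 = s := by omega
      have e5 : (1 + s + 1) * i = (s + 2) * i := by ring
      have e6 : (1 + s) * (i + 1) = (s + 1) * (i + 1) := by ring
      have hA := h3 (1+s+1) (i+1) (by omega) (by omega) hiH
      rw [e1, e2] at hA
      have hDa0 := IH2 hiH'
      rw [e3] at hDa0
      have hDb0 := IH (i+1) (by omega) hiH
      rw [e4] at hDb0
      have hOa0 := hObd (1+s+1) i (by omega) (by omega) hiH'
      rw [e3, e5] at hOa0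
      have hOb0 := hObd (1+s) (i+1) (by omega) (by omega) hiH
      rw [e4, e6] at hOb0
      have hL' : 1 ≤ L (i+1) := hL (i+1) (by omega) hiH
      have hFw1 : 1 ≤ δ * L (i+1) + rw (i+1) * E := hfacW (i+1) (by omega) hiH
      have hFv1 : 1 ≤ δ * L (i+1) + rv (i+1) * E := hfacV (i+1) (by omega) hiH
      have hWi1 := hWone i hiH'
      have hVi1 := hVone i hiH'
      have key := succ_step s i hi δ E (L (i+1))
        (δ * L (i+1) + rw (i+1) * E) (δ * L (i+1) + rv (i+1) * E)
        (p * L 1 + ∑ k ∈ Icc 1 i, L k) (p * L 1 + ∑ k ∈ Icc 1 (i+1), L k)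
        (∏ k ∈ Icc 1 i, (δ * L k + rw k * E)) (∏ k ∈ Icc 1 (i+1), (δ * L k + rw k * E))
        (∏ k ∈ Icc 1 i, (δ * L k + rv k * E)) (∏ k ∈ Icc 1 (i+1), (δ * L k + rv k * E))
        (∏ k ∈ Icc 1 i, rw k) (∏ k ∈ Icc 1 i, rv k)
        (∏ k ∈ Icc 1 (i+1), rw k) (∏ k ∈ Icc 1 (i+1), rv k)
        (D (1+s+1) (i+1)) (D (1+s+1) i) (D (1+s) (i+1)) (O (1+s+1) i) (O (1+s) (i+1))
        hδ hE hL' hFw1 hFv1 hWi1 hVi1 (hWone (i+1) hiH) (hVone (i+1) hiH)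
        (by linarith [hS_one i hiH'])
        (by rw [eS]; linarith)
        (by rw [eS]; linarith [hSum_nn i hiH'])
        (by linarith [hS_one (i+1) hiH])
        (by rw [eW]; exact le_mul_of_one_le_right (by linarith) hFw1)
        (by rw [eV]; exact le_mul_of_one_le_right (by linarith) hFv1)
        (by rw [eV]; exact le_mul_of_one_le_left (by linarith) hVi1)
        (hRWnn i hiH') (hRVnn i hiH') (hRWnn (i+1) hiH) (hRVnn (i+1) hiH)
        (hRW i hiH') (hRV i hiH') (hRW (i+1) hiH) (hRV (i+1) hiH)
        eW hA
        (hDa0.trans (le_of_eq (by push_cast; ring)))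
        (hDb0.trans (le_of_eq (by push_cast; ring)))
        (hOa0.trans (le_of_eq (by push_cast; ring)))
        (hOb0.trans (le_of_eq (by push_cast; ring)))
      rw [e3]
      calc D (1+s+1) (i+1)
          ≤ ((s:ℝ)+2)^(i+2) * δ * (p * L 1 + ∑ k ∈ Icc 1 (i+1), L k)
            * (∏ k ∈ Icc 1 (i+1), (δ * L k + rw k * E))
            * (∏ k ∈ Icc 1 (i+1), (δ * L k + rv k * E)) ^ (s+1) := key
        _ = (↑(1+s+1):ℝ)^(i+1+1) * δ * (p * L 1 + ∑ k ∈ Icc 1 (i+1), L k)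
            * (∏ k ∈ Icc 1 (i+1), (δ * L k + rw k * E))
            * (∏ k ∈ Icc 1 (i+1), (δ * L k + rv k * E)) ^ (s+1) := by push_cast; ring
end
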